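/- arXiv:1409.3943 — 2 statements merged into one kernel-verified Lean document; each statement's English description precedes it below -/
import Mathlib

section
/- Let A₀ and A₁ be NFAs over an alphabet of cardinality m, each of depth at most n (the depth is the number of states on the longest simple path). If there is no infinite alternating subsequence tower between L(A₀) and L(A₁), then every alternating subsequence tower (w_i)_{i=1}^{r} with w_i ∈ L(A_{i mod 2}) satisfies r ≤ (n^{m+1} − 1)/(n − 1). -/
open List
namespace TowerProof
variable {α : Type*} {σ : Type*}




/-- The word formed by the letters (given by `lett`) at positions in `S ∩ [a, a+k)`. -/
def pick (lett : ℕ → α) (S : Finset ℕ) : ℕ → ℕ → List α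
  | _, 0 => []
  | a, (k+1) => (if a ∈ S then [lett a] else []) ++ pick lett S (a+1) k

theorem pick_append (lett : ℕ → α) (S : Finset ℕ) (a k1 : ℕ) :
    ∀ k2, pick lett S a (k1 + k2) = pick lett S a k1 ++ pick lett S (a + k1) k2 := by
  induction k1 generalizing a with
  | zero => intro k2; simp [pick]
  | succ k ih =>
    intro k2
    have : k + 1 + k2 = (k + k2) + 1 := by omega
    rw [this]
    simp only [pick, ih (a+1), List.append_assoc]
    have h2 : a + 1 + k = a + (k + 1) := by omega
    rw [h2]

theorem mem_pick_iff (lett : ℕ → α) (S : Finset ℕ) (a k : ℕ) (x : α) :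
    x ∈ pick lett S a k ↔ ∃ t, t ∈ S ∧ a ≤ t ∧ t < a + k ∧ x = lett t := by
  induction k generalizing a with
  | zero => simp [pick]; omega
  | succ k ih =>
    simp only [pick, List.mem_append, ih (a+1)]
    constructor
    · rintro (h | ⟨t, ht, h1, h2, h3⟩)
      · by_cases ha : a ∈ S
        · simp [ha] at h; exact ⟨a, ha, le_refl a, by omega, h⟩
        · simp [ha] at h
      · exact ⟨t, ht, by omega, by omega, h3⟩
    · rintro ⟨t, ht, h1, h2, h3⟩
      rcases eq_or_lt_of_le h1 with rfl | hlt
      · left; simp [ht, h3]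
      · right; exact ⟨t, ht, by omega, by omega, h3⟩

theorem pick_congr {lett : ℕ → α} {S T : Finset ℕ} (a k : ℕ)
    (h : ∀ t, a ≤ t → t < a + k → (t ∈ S ↔ t ∈ T)) :
    pick lett S a k = pick lett T a k := by
  induction k generalizing a with
  | zero => rfl
  | succ k ih =>
    simp only [pick]
    have h0 : a ∈ S ↔ a ∈ T := h a le_rfl (by omega)
    rw [ih (a+1) (fun t h1 h2 => h t (by omega) (by omega))]
    by_cases ha : a ∈ S
    · simp [ha, h0.mp ha]
    · have ha' : a ∉ T := fun hc => ha (h0.mpr hc)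
      simp [ha, ha']

theorem pick_sublist_of_subset {lett : ℕ → α} {S T : Finset ℕ} (a k : ℕ)
    (h : S ⊆ T) : pick lett S a k <+ pick lett T a k := by
  induction k generalizing a with
  | zero => exact Sublist.refl _
  | succ k ih =>
    simp only [pick]
    refine List.Sublist.append ?_ (ih (a+1))
    by_cases ha : a ∈ S
    · simp [ha, h ha]
    · simp [ha]

theorem pick_length_le (lett : ℕ → α) (S : Finset ℕ) (a k : ℕ) :
    (pick lett S a k).length ≤ k := by
  induction k generalizing a with
  | zero => simp [pick]
  | succ k ih =>
    simp only [pick, List.length_append]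
    have := ih (a+1)
    by_cases ha : a ∈ S <;> simp [ha] <;> omega

/-- Any sublist of a `pick` is a `pick` of a subset. -/
theorem sublist_pick {lett : ℕ → α} {x : List α} {T : Finset ℕ} {a k : ℕ}
    (h : x <+ pick lett T a k) :
    ∃ S ⊆ T, (∀ t ∈ S, a ≤ t ∧ t < a + k) ∧ x = pick lett S a k := by
  induction k generalizing a x with
  | zero =>
    simp [pick] at h
    exact ⟨∅, by simp, by simp, by simp [h, pick]⟩
  | succ k ih =>
    simp only [pick] at h
    by_cases ha : a ∈ T
    · simp only [ha, if_true, List.singleton_append] at h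
      cases h with
      | cons _ h =>
        obtain ⟨S, hS, hr, rfl⟩ := ih h
        refine ⟨S, hS, fun t ht => ⟨by have := (hr t ht).1; omega,
          by have := (hr t ht).2; omega⟩, ?_⟩
        have : a ∉ S := fun hc => by have := (hr a hc).1; omega
        simp [pick, this]
      | cons_cons _ h =>
        obtain ⟨S, hS, hr, rfl⟩ := ih h
        refine ⟨insert a S, ?_, fun t ht => ?_, ?_⟩
        · intro t ht
          rcases Finset.mem_insert.mp ht with rfl | ht
          · exact ha
          · exact hS ht
        · rcases Finset.mem_insert.mp ht with rfl | ht
          · omega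
          · exact ⟨by have := (hr t ht).1; omega, by have := (hr t ht).2; omega⟩
        · have h1 : a ∈ insert a S := Finset.mem_insert_self a S
          simp only [pick, h1, if_true]
          congr 1
          apply pick_congr
          intro t h1 h2
          simp only [Finset.mem_insert]
          constructor
          · intro ht; exact Or.inr ht
          · rintro (rfl | ht)
            · omega
            · exact ht
    · simp only [ha, if_false, List.nil_append] at h
      obtain ⟨S, hS, hr, rfl⟩ := ih h
      refine ⟨S, hS, fun t ht => ⟨by have := (hr t ht).1; omega, by have := (hr t ht).2; omega⟩, ?_⟩
      have : a ∉ S := fun hc => by have := (hr a hc).1; omega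
      simp [pick, this]

/-- A lazy run of `M` on the positions `S` (within `[a, a+k)`), reading letters `lett`. -/
def LRun (M : NFA α σ) (lett : ℕ → α) (S : Finset ℕ) (F : ℕ → σ) (a k : ℕ) : Prop :=
  ∀ t, a ≤ t → t < a + k →
    (t ∈ S → F (t+1) ∈ M.step (F t) (lett t)) ∧ (t ∉ S → F (t+1) = F t)

theorem LRun.mono {M : NFA α σ} {lett : ℕ → α} {S : Finset ℕ} {F : ℕ → σ} {a k a' k' : ℕ}
    (h : LRun M lett S F a k) (h1 : a ≤ a') (h2 : a' + k' ≤ a + k) :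
    LRun M lett S F a' k' := fun t ht1 ht2 => h t (by omega) (by omega)

theorem evalFrom_append' (M : NFA α σ) (S : Set σ) (x y : List α) :
    M.evalFrom S (x ++ y) = M.evalFrom (M.evalFrom S x) y :=
  List.foldl_append

theorem evalFrom_mono (M : NFA α σ) {S T : Set σ} (h : S ⊆ T) (x : List α) :
    M.evalFrom S x ⊆ M.evalFrom T x := by
  induction x generalizing S T with
  | nil => exact h
  | cons a x ih =>
    have : M.stepSet S a ⊆ M.stepSet T a := by
      intro q hq
      rw [NFA.mem_stepSet] at hq ⊢
      obtain ⟨t, ht, hq⟩ := hq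
      exact ⟨t, h ht, hq⟩
    exact ih this

/-- Main bridge: a lazy run over `[a, a+k)` evaluates the picked word. -/
theorem LRun.eval {M : NFA α σ} {lett : ℕ → α} {S : Finset ℕ} {F : ℕ → σ} {a k : ℕ}
    (h : LRun M lett S F a k) :
    F (a + k) ∈ M.evalFrom {F a} (pick lett S a k) := by
  induction k with
  | zero => simp [pick]
  | succ k ih =>
    have hsplit : pick lett S a (k + 1) = pick lett S a k ++ pick lett S (a+k) 1 :=
      pick_append lett S a k 1
    rw [hsplit, evalFrom_append' ]
    have hk : F (a + k) ∈ M.evalFrom {F a} (pick lett S a k) :=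
      ih (h.mono le_rfl (by omega))
    have hmono := evalFrom_mono M (Set.singleton_subset_iff.mpr hk) (pick lett S (a+k) 1)
    apply hmono
    simp only [pick]
    by_cases hS : a + k ∈ S
    · simp only [hS, if_true]
      have := (h (a+k) (by omega) (by omega)).1 hS
      simp only [List.singleton_append, NFA.evalFrom_singleton, NFA.mem_stepSet]
      have e : a + k + 1 = a + (k+1) := by omega
      exact ⟨F (a+k), rfl, by rw [← e]; exact this⟩
    · simp only [hS, if_false]
      have := (h (a+k) (by omega) (by omega)).2 hS
      have e : a + (k + 1) = (a + k) + 1 := by omega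
      rw [e, this]
      simp

/-- Converse bridge: evaluation gives a lazy run. -/
theorem exists_lrun {M : NFA α σ} {lett : ℕ → α} {S : Finset ℕ} {a k : ℕ} {Q : Set σ} {q : σ}
    (h : q ∈ M.evalFrom Q (pick lett S a k)) :
    ∃ F : ℕ → σ, F a ∈ Q ∧ F (a + k) = q ∧ LRun M lett S F a k := by
  induction k generalizing q with
  | zero =>
    simp only [pick, NFA.evalFrom_nil] at h
    exact ⟨fun _ => q, h, by simp, fun t h1 h2 => by omega⟩
  | succ k ih =>
    rw [pick_append lett S a k 1, evalFrom_append'] at h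
    simp only [pick] at h
    by_cases hS : a + k ∈ S
    · simp only [hS, if_true, List.singleton_append, NFA.evalFrom_singleton,
        NFA.mem_stepSet] at h
      obtain ⟨q', hq', hstep⟩ := h
      obtain ⟨F, hF1, hF2, hF3⟩ := ih hq'
      refine ⟨fun t => if t ≤ a + k then F t else q, ?_, ?_, ?_⟩
      · simp only [if_pos (by omega : a ≤ a + k)]; exact hF1
      · simp only [if_neg (by omega : ¬ (a + (k+1) ≤ a + k))]
      · intro t h1 h2
        constructor
        · intro htS
          by_cases hlt : t < a + k
          · simp only [if_pos (by omega : t ≤ a + k), if_pos (by omega : t + 1 ≤ a + k)]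
            exact (hF3 t h1 hlt).1 htS
          · have e : t = a + k := by omega
            subst e
            show (if a+k+1 ≤ a+k then F (a+k+1) else q) ∈
              M.step (if a+k ≤ a+k then F (a+k) else q) (lett (a+k))
            rw [if_neg (by omega : ¬ (a+k+1 ≤ a+k)), if_pos (le_refl (a+k)), hF2]
            exact hstep
        · intro htS
          by_cases hlt : t < a + k
          · simp only [if_pos (by omega : t ≤ a + k), if_pos (by omega : t + 1 ≤ a + k)]
            exact (hF3 t h1 hlt).2 htS
          · have e : t = a + k := by omega
            subst e
            exact absurd hS htS
    · simp only [hS, if_false, List.nil_append, NFA.evalFrom_nil] at h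
      obtain ⟨F, hF1, hF2, hF3⟩ := ih h
      refine ⟨fun t => if t ≤ a + k then F t else q, ?_, ?_, ?_⟩
      · simp only [if_pos (by omega : a ≤ a + k)]; exact hF1
      · simp only [if_neg (by omega : ¬ (a + (k+1) ≤ a + k))]
      · intro t h1 h2
        constructor
        · intro htS
          by_cases hlt : t < a + k
          · simp only [if_pos (by omega : t ≤ a + k), if_pos (by omega : t + 1 ≤ a + k)]
            exact (hF3 t h1 hlt).1 htS
          · have e : t = a + k := by omega
            subst e
            exact absurd htS hS
        · intro htS
          by_cases hlt : t < a + k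
          · simp only [if_pos (by omega : t ≤ a + k), if_pos (by omega : t + 1 ≤ a + k)]
            exact (hF3 t h1 hlt).2 htS
          · have e : t = a + k := by omega
            subst e
            show (if a+k+1 ≤ a+k then F (a+k+1) else q) = (if a+k ≤ a+k then F (a+k) else q)
            rw [if_neg (by omega : ¬ (a+k+1 ≤ a+k)), if_pos (le_refl (a+k)), hF2]

/-- `T` copies of `d`. -/
def rep (d : List α) : ℕ → List α
  | 0 => []
  | (T+1) => d ++ rep d T

theorem mem_rep {d : List α} {T : ℕ} {x : α} (h : x ∈ rep d T) : x ∈ d := by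
  induction T with
  | zero => simp [rep] at h
  | succ T ih =>
    rcases List.mem_append.mp h with h | h
    · exact h
    · exact ih h

/-- absorb: a word whose letters all occur in `d` embeds into enough copies of `d`. -/
theorem sublist_rep {u d : List α} (hmem : ∀ x ∈ u, x ∈ d) :
    ∀ T, u.length ≤ T → u <+ rep d T := by
  induction u with
  | nil => intro T _; exact List.nil_sublist _
  | cons a u ih =>
    intro T hT
    obtain ⟨T', rfl⟩ : ∃ T', T = T' + 1 := ⟨T - 1, by simp at hT; omega⟩
    have ha : a ∈ d := hmem a (by simp)
    obtain ⟨d1, d2, rfl⟩ := List.append_of_mem ha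
    have hu : u <+ rep (d1 ++ a :: d2) T' :=
      ih (fun x hx => hmem x (by simp [hx])) T' (by simp at hT; omega)
    show a :: u <+ (d1 ++ a :: d2) ++ rep (d1 ++ a :: d2) T'
    rw [List.append_assoc]
    refine List.Sublist.trans ?_ (List.sublist_append_right d1 _)
    exact List.Sublist.cons₂ a (hu.trans (List.sublist_append_right d2 _))

theorem evalFrom_rep {M : NFA α σ} {q : σ} {d : List α}
    (h : q ∈ M.evalFrom {q} d) (T : ℕ) : q ∈ M.evalFrom {q} (rep d T) := by
  induction T with
  | zero => simp [rep]
  | succ T ih =>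
    show q ∈ M.evalFrom {q} (d ++ rep d T)
    rw [evalFrom_append']
    exact evalFrom_mono M (Set.singleton_subset_iff.mpr h) (rep d T) ih


theorem LRun.evalSeg {M : NFA α σ} {lett : ℕ → α} {S : Finset ℕ} {F : ℕ → σ} {N : ℕ}
    (h : LRun M lett S F 0 N) (a b : ℕ) (hab : a ≤ b) (hbN : b ≤ N) :
    F b ∈ M.evalFrom {F a} (pick lett S a (b - a)) := by
  have h2 : LRun M lett S F a (b - a) := h.mono (by omega) (by omega)
  have h3 := h2.eval
  rwa [show a + (b - a) = b by omega] at h3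


theorem sublist_mid {u v pre post : List α} (h : u <+ v) : u <+ pre ++ v ++ post := by
  rw [List.append_assoc]
  exact (h.trans (List.sublist_append_left v post)).trans (List.sublist_append_right pre _)


section Trigger

variable {σ' : Type*} (M : NFA α σ) (M' : NFA α σ')

theorem evalChain {Q : Set σ} {q2 q3 : σ} {u v : List α}
    (h1 : q2 ∈ M.evalFrom Q u) (h2 : q3 ∈ M.evalFrom {q2} v) :
    q3 ∈ M.evalFrom Q (u ++ v) := by
  rw [evalFrom_append']
  exact evalFrom_mono M (Set.singleton_subset_iff.mpr h1) v h2

theorem trigger_core (lett : ℕ → α) (N : ℕ) (S S' : Finset ℕ) (F : ℕ → σ) (F' : ℕ → σ')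
    (hS : S ⊆ S')
    (hF : LRun M lett S F 0 N) (hF' : LRun M' lett S' F' 0 N)
    (zs : List (ℕ × ℕ × Finset α)) :
    ∀ pos, pos ≤ N →
    (∀ z ∈ zs, pos ≤ z.1 ∧ z.1 ≤ z.2.1 ∧ z.2.1 ≤ N) →
    (zs.Pairwise (fun z z' => z.2.1 ≤ z'.1)) →
    (∀ z ∈ zs, (∀ t ∈ S', z.1 ≤ t → t < z.2.1 → lett t ∈ z.2.2)) →
    (∀ z ∈ zs, (∃ a b, z.1 ≤ a ∧ a ≤ b ∧ b ≤ z.2.1 ∧ F a = F b ∧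
        ∀ γ ∈ z.2.2, ∃ t, t ∈ S ∧ a ≤ t ∧ t < b ∧ lett t = γ) ∧
        (∃ a b, z.1 ≤ a ∧ a ≤ b ∧ b ≤ z.2.1 ∧ F' a = F' b ∧
        ∀ γ ∈ z.2.2, ∃ t, t ∈ S' ∧ a ≤ t ∧ t < b ∧ lett t = γ)) →
    (∀ p, p ∈ S' → p ∉ S → pos ≤ p → p < N → ∃ z ∈ zs, z.1 ≤ p ∧ p < z.2.1) →
    ∃ f g : ℕ → List α,
      (∀ T, F N ∈ M.evalFrom {F pos} (f T)) ∧
      (∀ T, F' N ∈ M'.evalFrom {F' pos} (g T)) ∧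
      (∀ T T', (f T).length ≤ T' → f T <+ g T') ∧
      (∀ T T', (g T).length ≤ T' → g T <+ f T') := by
  induction zs with
  | nil =>
    intro pos hposN _ _ _ _ hcov
    have heq : pick lett S' pos (N - pos) = pick lett S pos (N - pos) := by
      apply pick_congr
      intro t h1 h2
      constructor
      · intro ht
        by_contra htS
        obtain ⟨z, hz, _⟩ := hcov t ht htS h1 (by omega)
        exact absurd hz List.not_mem_nil
      · exact fun ht => hS ht
    refine ⟨fun _ => pick lett S pos (N - pos), fun _ => pick lett S pos (N - pos),
      fun T => ?_, fun T => ?_, fun _ _ _ => List.Sublist.refl _, fun _ _ _ => List.Sublist.refl _⟩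
    · exact hF.evalSeg pos N hposN (le_refl N)
    · rw [← heq]
      exact hF'.evalSeg pos N hposN (le_refl N)
  | cons z zs ih =>
    intro pos hposN hbounds hpair hlets hcycs hcov
    obtain ⟨zlo, zhi, Γ⟩ := z
    have hz := hbounds _ (List.mem_cons_self)
    simp only at hz
    obtain ⟨hpz, hzz, hzN⟩ := hz
    obtain ⟨⟨a, b, hza, hab, hbz, hFab, hcycF⟩, ⟨a', b', hza', hab', hbz', hFab', hcycG⟩⟩ :=
      hcycs _ (List.mem_cons_self)
    dsimp only at hza hab hbz hFab hcycF hza' hab' hbz' hFab' hcycG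
    have hlet := hlets _ (List.mem_cons_self)
    dsimp only at hlet
    have hpairhd : ∀ z' ∈ zs, zhi ≤ z'.1 := by
      intro z' hz'
      exact (List.pairwise_cons.mp hpair).1 z' hz'
    -- IH from zhi
    obtain ⟨f', g', P1', P2', P3', P4'⟩ := ih zhi hzN
      (fun z' hz' => ⟨hpairhd z' hz', (hbounds z' (List.mem_cons_of_mem _ hz')).2⟩)
      (List.pairwise_cons.mp hpair).2
      (fun z' hz' => hlets z' (List.mem_cons_of_mem _ hz'))
      (fun z' hz' => hcycs z' (List.mem_cons_of_mem _ hz'))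
      (by
        intro p hp1 hp2 hp3 hp4
        obtain ⟨z', hz', h1, h2⟩ := hcov p hp1 hp2 (by omega) hp4
        rcases List.mem_cons.mp hz' with rfl | hz'
        · simp only at h1 h2; omega
        · exact ⟨z', hz', h1, h2⟩)
    -- pieces
    set preF := pick lett S pos (zlo - pos) with hpreF
    set preG := pick lett S' pos (zlo - pos) with hpreG
    have hpre : preG = preF := by
      apply pick_congr
      intro t h1 h2
      constructor
      · intro ht
        by_contra htS
        obtain ⟨z', hz', hc1, hc2⟩ := hcov t ht htS (by omega) (by omega)
        rcases List.mem_cons.mp hz' with rfl | hz'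
        · simp only at hc1 hc2; omega
        · have := hpairhd z' hz'; omega
      · exact fun ht => hS ht
    set eF := pick lett S zlo (a - zlo)
    set cF := pick lett S a (b - a) with hcF
    set fF := pick lett S b (zhi - b)
    set eG := pick lett S' zlo (a' - zlo)
    set cG := pick lett S' a' (b' - a') with hcG
    set fG := pick lett S' b' (zhi - b')
    have hmemcF : ∀ γ ∈ Γ, γ ∈ cF := by
      intro γ hγ
      obtain ⟨t, ht, h1, h2, h3⟩ := hcycF γ hγ
      rw [hcF, mem_pick_iff]
      exact ⟨t, ht, h1, by omega, h3.symm⟩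
    have hmemcG : ∀ γ ∈ Γ, γ ∈ cG := by
      intro γ hγ
      obtain ⟨t, ht, h1, h2, h3⟩ := hcycG γ hγ
      rw [hcG, mem_pick_iff]
      exact ⟨t, ht, h1, by omega, h3.symm⟩
    have hmidF : ∀ T x, x ∈ eF ++ rep cF T ++ fF → x ∈ Γ := by
      intro T x hx
      have : ∃ t, t ∈ S ∧ zlo ≤ t ∧ t < zhi ∧ x = lett t := by
        rcases List.mem_append.mp hx with hx | hx
        · rcases List.mem_append.mp hx with hx | hx
          · obtain ⟨t, ht, h1, h2, h3⟩ := (mem_pick_iff _ _ _ _ _).mp hx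
            exact ⟨t, ht, by omega, by omega, h3⟩
          · obtain ⟨t, ht, h1, h2, h3⟩ := (mem_pick_iff _ _ _ _ _).mp (mem_rep hx)
            exact ⟨t, ht, by omega, by omega, h3⟩
        · obtain ⟨t, ht, h1, h2, h3⟩ := (mem_pick_iff _ _ _ _ _).mp hx
          exact ⟨t, ht, by omega, by omega, h3⟩
      obtain ⟨t, ht, h1, h2, h3⟩ := this
      rw [h3]
      exact hlet t (hS ht) h1 h2
    have hmidG : ∀ T x, x ∈ eG ++ rep cG T ++ fG → x ∈ Γ := by
      intro T x hx
      have : ∃ t, t ∈ S' ∧ zlo ≤ t ∧ t < zhi ∧ x = lett t := by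
        rcases List.mem_append.mp hx with hx | hx
        · rcases List.mem_append.mp hx with hx | hx
          · obtain ⟨t, ht, h1, h2, h3⟩ := (mem_pick_iff _ _ _ _ _).mp hx
            exact ⟨t, ht, by omega, by omega, h3⟩
          · obtain ⟨t, ht, h1, h2, h3⟩ := (mem_pick_iff _ _ _ _ _).mp (mem_rep hx)
            exact ⟨t, ht, by omega, by omega, h3⟩
        · obtain ⟨t, ht, h1, h2, h3⟩ := (mem_pick_iff _ _ _ _ _).mp hx
          exact ⟨t, ht, by omega, by omega, h3⟩
      obtain ⟨t, ht, h1, h2, h3⟩ := this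
      rw [h3]
      exact hlet t ht h1 h2
    refine ⟨fun T => preF ++ (eF ++ rep cF T ++ fF) ++ f' T,
            fun T => preG ++ (eG ++ rep cG T ++ fG) ++ g' T, ?_, ?_, ?_, ?_⟩
    · -- eval F
      intro T
      refine evalChain M ?_ (P1' T)
      refine evalChain M (hF.evalSeg pos zlo (by omega) (by omega)) ?_
      have h2 : F zhi ∈ M.evalFrom {F b} fF := hF.evalSeg b zhi hbz (by omega)
      rw [← hFab] at h2
      refine evalChain M (q2 := F a) ?_ h2
      refine evalChain M (hF.evalSeg zlo a (by omega) (by omega)) ?_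
      have h1 : F b ∈ M.evalFrom {F a} cF := hF.evalSeg a b hab (by omega)
      rw [← hFab] at h1
      exact evalFrom_rep h1 T
    · -- eval G
      intro T
      refine evalChain M' ?_ (P2' T)
      have hpre2 : F' zlo ∈ M'.evalFrom {F' pos} preG := hF'.evalSeg pos zlo (by omega) (by omega)
      refine evalChain M' hpre2 ?_
      have h2 : F' zhi ∈ M'.evalFrom {F' b'} fG := hF'.evalSeg b' zhi hbz' (by omega)
      rw [← hFab'] at h2
      refine evalChain M' (q2 := F' a') ?_ h2
      refine evalChain M' (hF'.evalSeg zlo a' (by omega) (by omega)) ?_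
      have h1 : F' b' ∈ M'.evalFrom {F' a'} cG := hF'.evalSeg a' b' hab' (by omega)
      rw [← hFab'] at h1
      exact evalFrom_rep h1 T
    · -- f T <+ g T'
      intro T T' hlen
      have hlen' : (preF ++ (eF ++ rep cF T ++ fF) ++ f' T).length =
          preF.length + (eF ++ rep cF T ++ fF).length + (f' T).length := by
        simp [List.length_append]
        omega
      refine List.Sublist.append (List.Sublist.append ?_ ?_) ?_
      · rw [hpre]
      · refine sublist_mid (sublist_rep ?_ T' ?_)
        · intro x hx
          exact hmemcG _ (hmidF T x hx)
        · rw [hlen'] at hlen; omega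
      · refine P3' T T' ?_
        rw [hlen'] at hlen; omega
    · -- g T <+ f T'
      intro T T' hlen
      have hlen' : (preG ++ (eG ++ rep cG T ++ fG) ++ g' T).length =
          preG.length + (eG ++ rep cG T ++ fG).length + (g' T).length := by
        simp [List.length_append]
        omega
      refine List.Sublist.append (List.Sublist.append ?_ ?_) ?_
      · rw [hpre]
      · refine sublist_mid (sublist_rep ?_ T' ?_)
        · intro x hx
          exact hmemcF _ (hmidG T x hx)
        · rw [hlen'] at hlen; omega
      · refine P4' T T' ?_
        rw [hlen'] at hlen; omega


/-- An infinite alternating subsequence tower between `K` and `L`. -/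
def InfSubTower' {α : Type*} (K L : Set (List α)) (w : ℕ → List α) : Prop :=
  w 0 ∈ K ∪ L ∧
    ∀ i, (w i).Sublist (w (i + 1)) ∧
      (w i ∈ K → w (i + 1) ∈ L) ∧ (w i ∈ L → w (i + 1) ∈ K)

theorem InfSubTower'_swap {K L : Set (List α)} {t : ℕ → List α}
    (h : InfSubTower' K L t) : InfSubTower' L K t := by
  obtain ⟨h0, h1⟩ := h
  refine ⟨?_, fun i => ⟨(h1 i).1, (h1 i).2.2, (h1 i).2.1⟩⟩
  rcases h0 with h0 | h0
  · exact Or.inr h0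
  · exact Or.inl h0

theorem trigger (lett : ℕ → α) (N : ℕ) (S S' : Finset ℕ) (F : ℕ → σ) (F' : ℕ → σ')
    (hS : S ⊆ S')
    (hF : LRun M lett S F 0 N) (hF' : LRun M' lett S' F' 0 N)
    (hst : F 0 ∈ M.start) (hac : F N ∈ M.accept)
    (hst' : F' 0 ∈ M'.start) (hac' : F' N ∈ M'.accept)
    (hdisj : ∀ u, u ∈ M.accepts → u ∈ M'.accepts → False)
    (zs : List (ℕ × ℕ × Finset α))
    (hbounds : ∀ z ∈ zs, z.1 ≤ z.2.1 ∧ z.2.1 ≤ N)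
    (hpair : zs.Pairwise (fun z z' => z.2.1 ≤ z'.1))
    (hlets : ∀ z ∈ zs, (∀ t ∈ S', z.1 ≤ t → t < z.2.1 → lett t ∈ z.2.2))
    (hcycs : ∀ z ∈ zs, (∃ a b, z.1 ≤ a ∧ a ≤ b ∧ b ≤ z.2.1 ∧ F a = F b ∧
        ∀ γ ∈ z.2.2, ∃ t, t ∈ S ∧ a ≤ t ∧ t < b ∧ lett t = γ) ∧
        (∃ a b, z.1 ≤ a ∧ a ≤ b ∧ b ≤ z.2.1 ∧ F' a = F' b ∧
        ∀ γ ∈ z.2.2, ∃ t, t ∈ S' ∧ a ≤ t ∧ t < b ∧ lett t = γ))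
    (hcov : ∀ p, p ∈ S' → p ∉ S → p < N → ∃ z ∈ zs, z.1 ≤ p ∧ p < z.2.1) :
    ∃ t, InfSubTower' (M.accepts : Set (List α)) (M'.accepts : Set (List α)) t := by
  obtain ⟨f, g, P1, P2, P3, P4⟩ := trigger_core M M' lett N S S' F F' hS hF hF' zs 0
    (Nat.zero_le N) (fun z hz => ⟨Nat.zero_le _, hbounds z hz⟩) hpair hlets hcycs
    (fun p h1 h2 _ h4 => hcov p h1 h2 h4)
  have memF : ∀ T, f T ∈ M.accepts := by
    intro T
    exact ⟨F N, hac, evalFrom_mono M (Set.singleton_subset_iff.mpr hst) (f T) (P1 T)⟩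
  have memG : ∀ T, g T ∈ M'.accepts := by
    intro T
    exact ⟨F' N, hac', evalFrom_mono M' (Set.singleton_subset_iff.mpr hst') (g T) (P2 T)⟩
  classical
  let u : ℕ → List α := fun k =>
    Nat.rec (f 1) (fun k prev => if k % 2 = 0 then g prev.length else f prev.length) k
  have hu0 : u 0 = f 1 := rfl
  have hustep : ∀ k, u (k+1) = if k % 2 = 0 then g (u k).length else f (u k).length :=
    fun k => rfl
  have hform : ∀ k, (k % 2 = 0 → ∃ T, u k = f T) ∧ (k % 2 = 1 → ∃ T, u k = g T) := by
    intro k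
    induction k with
    | zero => exact ⟨fun _ => ⟨1, rfl⟩, fun h => by simp at h⟩
    | succ k ih =>
      rw [hustep k]
      rcases Nat.even_or_odd k with hk | hk
      · have hk2 : k % 2 = 0 := Nat.even_iff.mp hk
        rw [hk2]
        refine ⟨fun h => by omega, fun _ => ⟨(u k).length, by simp⟩⟩
      · have hk2 : k % 2 = 1 := Nat.odd_iff.mp hk
        rw [hk2]
        refine ⟨fun _ => ⟨(u k).length, by simp⟩, fun h => by omega⟩
  have hchain : ∀ k, u k <+ u (k+1) := by
    intro k
    rw [hustep k]
    rcases Nat.even_or_odd k with hk | hk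
    · have hk2 : k % 2 = 0 := Nat.even_iff.mp hk
      rw [hk2, if_pos rfl]
      obtain ⟨T, hT⟩ := (hform k).1 hk2
      rw [hT]
      exact P3 T _ (by rw [← hT])
    · have hk2 : k % 2 = 1 := Nat.odd_iff.mp hk
      rw [hk2, if_neg (by omega)]
      obtain ⟨T, hT⟩ := (hform k).2 hk2
      rw [hT]
      exact P4 T _ (by rw [← hT])
  have hmem : ∀ k, (k % 2 = 0 → u k ∈ M.accepts) ∧ (k % 2 = 1 → u k ∈ M'.accepts) := by
    intro k
    constructor
    · intro h
      obtain ⟨T, hT⟩ := (hform k).1 h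
      rw [hT]; exact memF T
    · intro h
      obtain ⟨T, hT⟩ := (hform k).2 h
      rw [hT]; exact memG T
  refine ⟨u, Or.inl ((hmem 0).1 rfl), ?_⟩
  intro i
  refine ⟨hchain i, ?_, ?_⟩
  · intro hK
    rcases Nat.even_or_odd i with hi | hi
    · have hi2 : i % 2 = 0 := Nat.even_iff.mp hi
      exact (hmem (i+1)).2 (by omega)
    · have hi2 : i % 2 = 1 := Nat.odd_iff.mp hi
      exact absurd hK (fun hK => hdisj _ hK ((hmem i).2 hi2))
  · intro hL
    rcases Nat.even_or_odd i with hi | hi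
    · have hi2 : i % 2 = 0 := Nat.even_iff.mp hi
      exact absurd hL (fun hL => hdisj _ ((hmem i).1 hi2) hL)
    · have hi2 : i % 2 = 1 := Nat.odd_iff.mp hi
      exact (hmem (i+1)).1 (by omega)

end Trigger

section Factorization

/-- local copy of the depth predicate -/
def DepthLEx {α σ : Type*} (M : NFA α σ) (n : ℕ) : Prop :=
  ∀ l : List σ, l.Chain' (fun p q => ∃ c, q ∈ M.step p c) → l.Nodup →
    l.length ≤ n

theorem LRun.const {M : NFA α σ} {lett : ℕ → α} {S : Finset ℕ} {F : ℕ → σ} {N : ℕ}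
    (hF : LRun M lett S F 0 N) (c d : ℕ) (hcd : c ≤ d) (hdN : d ≤ N)
    (hno : ∀ u, c ≤ u → u < d → u ∉ S) : F d = F c := by
  induction d, hcd using Nat.le_induction with
  | base => rfl
  | succ d hd ih =>
    have h1 : F (d+1) = F d := (hF d (by omega) (by omega)).2 (hno d (by omega) (by omega))
    rw [h1]
    exact ih (by omega) (fun u h1 h2 => hno u h1 (by omega))

theorem factorization (lett : ℕ → α) {M : NFA α σ} {n : ℕ} (hdep : DepthLEx M n)
    {S : Finset ℕ} {F : ℕ → σ} {N : ℕ} (hF : LRun M lett S F 0 N)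
    {lo hi : ℕ} (hlohi : lo ≤ hi) (hhiN : hi ≤ N) {Γ : Finset α}
    (hnocyc : ¬ ∃ a b, lo ≤ a ∧ a ≤ b ∧ b ≤ hi ∧ F a = F b ∧
       ∀ γ ∈ Γ, ∃ t, t ∈ S ∧ a ≤ t ∧ t < b ∧ lett t = γ) :
    ∃ gaps : List (ℕ × ℕ),
      1 + gaps.length ≤ n + 1 ∧
      (∀ gp ∈ gaps, lo ≤ gp.1 ∧ gp.1 ≤ gp.2 ∧ gp.2 ≤ hi) ∧
      (∀ p, lo ≤ p → p < hi →
        (∃ gp ∈ gaps, gp.1 ≤ p ∧ p < gp.2) ∨ (∃ gp ∈ gaps, p = gp.2 ∧ gp.2 < hi)) ∧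
      (∃ gp ∈ gaps, gp.2 = hi) ∧
      (∀ gp ∈ gaps, ∃ γ ∈ Γ, ∀ u, u ∈ S → gp.1 ≤ u → u < gp.2 → lett u ≠ γ) ∧
      (gaps.map Prod.snd).Pairwise (· < ·) ∧
      gaps.Pairwise (fun x y => x.2 ≤ y.1) := by
  have hΓ : Γ.Nonempty := by
    by_contra hcon
    rw [Finset.not_nonempty_iff_eq_empty] at hcon
    exact hnocyc ⟨lo, lo, le_rfl, le_rfl, hlohi, rfl, by simp [hcon]⟩
  suffices H : ∀ d s (path : List σ), lo ≤ s → s ≤ hi → hi - s ≤ d → ∀ hne : path ≠ [],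
      path.Chain' (fun p q => ∃ c, q ∈ M.step p c) → path.Nodup →
      path.getLast hne = F s →
      (∀ q ∈ path.dropLast, ∀ u, s ≤ u → u ≤ hi → F u ≠ q) →
      ∃ gaps : List (ℕ × ℕ),
        path.length + gaps.length ≤ n + 1 ∧
        (∀ gp ∈ gaps, s ≤ gp.1 ∧ gp.1 ≤ gp.2 ∧ gp.2 ≤ hi) ∧
        (∀ p, s ≤ p → p < hi →
          (∃ gp ∈ gaps, gp.1 ≤ p ∧ p < gp.2) ∨ (∃ gp ∈ gaps, p = gp.2 ∧ gp.2 < hi)) ∧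
        (∃ gp ∈ gaps, gp.2 = hi) ∧
        (∀ gp ∈ gaps, ∃ γ ∈ Γ, ∀ u, u ∈ S → gp.1 ≤ u → u < gp.2 → lett u ≠ γ) ∧
        (gaps.map Prod.snd).Pairwise (· < ·) ∧
        gaps.Pairwise (fun x y => x.2 ≤ y.1) by
    obtain ⟨gaps, h1, h2, h3, h4, h5, h6, h7⟩ := H (hi - lo) lo [F lo] le_rfl hlohi le_rfl
      (by simp) (List.isChain_singleton _) (by simp) (by simp) (by simp)
    exact ⟨gaps, by simpa using h1, h2, h3, h4, h5, h6, h7⟩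
  intro d
  induction d with
  | zero =>
    intro s path hlos hshi hd hne hchain hnodup hlast havoid
    obtain ⟨γ0, hγ0⟩ := hΓ
    refine ⟨[(s, hi)], ?_, ?_, ?_, ?_, ?_, ?_, ?_⟩
    · have := hdep path hchain hnodup
      simp only [List.length_singleton]
      omega
    · simp only [List.mem_singleton, forall_eq]
      exact ⟨le_rfl, hshi, le_rfl⟩
    · intro p h1 h2
      omega
    · exact ⟨(s, hi), by simp, rfl⟩
    · intro gp hgp
      simp only [List.mem_singleton] at hgp
      subst hgp
      exact ⟨γ0, hγ0, fun u _ h2 h3 => by dsimp only at h2 h3; omega⟩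
    · simp
    · simp
  | succ d ih =>
    intro s path hlos hshi hd hne hchain hnodup hlast havoid
    classical
    set A := (Finset.Icc s hi).filter (fun u => F u = F s) with hA
    have hAne : A.Nonempty := ⟨s, by simp [hA]; omega⟩
    set j := A.max' hAne with hj
    have hjmem : j ∈ A := A.max'_mem hAne
    have hjprop : (s ≤ j ∧ j ≤ hi) ∧ F j = F s := by
      have := hjmem
      simpa [hA] using this
    have hjmax : ∀ u, s ≤ u → u ≤ hi → F u = F s → u ≤ j := by
      intro u h1 h2 h3
      exact A.le_max' u (by simp [hA]; exact ⟨⟨h1, h2⟩, h3⟩)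
    have hmiss : ∃ γ ∈ Γ, ∀ u, u ∈ S → s ≤ u → u < j → lett u ≠ γ := by
      by_contra hcon
      push_neg at hcon
      apply hnocyc
      refine ⟨s, j, hlos, hjprop.1.1, hjprop.1.2, hjprop.2.symm, ?_⟩
      intro γ hγ
      obtain ⟨u, hu1, hu2, hu3, hu4⟩ := hcon γ hγ
      exact ⟨u, hu1, hu2, hu3, hu4⟩
    by_cases hB : ((S.filter (fun u => j ≤ u ∧ u < hi))).Nonempty
    · -- cut at t, recurse from t+1
      set t := (S.filter (fun u => j ≤ u ∧ u < hi)).min' hB with ht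
      have htmem := (S.filter (fun u => j ≤ u ∧ u < hi)).min'_mem hB
      simp only [Finset.mem_filter] at htmem
      obtain ⟨htS, hjt, hthi⟩ := htmem
      have htmin : ∀ u ∈ S, j ≤ u → u < hi → t ≤ u := by
        intro u h1 h2 h3
        exact (S.filter (fun v => j ≤ v ∧ v < hi)).min'_le u (by simp [h1, h2, h3])
      have hconst : F t = F j := by
        apply hF.const j t hjt (by omega)
        intro u h1 h2 hu
        exact absurd (htmin u hu h1 (by omega)) (by omega)
      have hFts : F t = F s := by rw [hconst]; exact hjprop.2
      have hedge : ∃ c, F (t+1) ∈ M.step (F s) c := by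
        refine ⟨lett t, ?_⟩
        rw [← hFts]
        exact (hF t (by omega) (by omega)).1 htS
      have hnotin : F (t+1) ∉ path := by
        intro hmem
        rw [← List.dropLast_append_getLast hne] at hmem
        rcases List.mem_append.mp hmem with hmem | hmem
        · exact havoid _ hmem (t+1) (by omega) (by omega) rfl
        · simp only [List.mem_singleton] at hmem
          rw [hlast] at hmem
          have := hjmax (t+1) (by omega) (by omega) hmem
          omega
      have hne' : path ++ [F (t+1)] ≠ [] := by simp
      have hchain' : (path ++ [F (t+1)]).Chain' (fun p q => ∃ c, q ∈ M.step p c) := by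
        unfold List.Chain'
        rw [List.isChain_append]
        refine ⟨hchain, List.isChain_singleton _, ?_⟩
        intro x hx y hy
        rw [List.getLast?_eq_getLast hne] at hx
        simp only [Option.mem_def, Option.some_inj] at hx
        simp only [List.head?_cons, Option.mem_def, Option.some_inj] at hy
        subst hx; subst hy
        rw [hlast]
        exact hedge
      have hnodup' : (path ++ [F (t+1)]).Nodup := by
        rw [List.nodup_append]
        refine ⟨hnodup, by simp, ?_⟩
        intro a ha b hb
        simp only [List.mem_singleton] at hb
        subst hb
        exact fun hab => hnotin (hab ▸ ha)
      have hlast' : (path ++ [F (t+1)]).getLast hne' = F (t+1) := by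
        simp [List.getLast_append]
      have havoid' : ∀ q ∈ (path ++ [F (t+1)]).dropLast, ∀ u, t+1 ≤ u → u ≤ hi → F u ≠ q := by
        intro q hq u h1 h2
        have hq' : q ∈ path := by
          have e : (path ++ [F (t+1)]).dropLast = path := by
            simp
          rwa [e] at hq
        rw [← List.dropLast_append_getLast hne] at hq'
        rcases List.mem_append.mp hq' with hq' | hq'
        · exact havoid q hq' u (by omega) h2
        · simp only [List.mem_singleton] at hq'
          subst hq'
          rw [hlast]
          intro hcon
          have := hjmax u (by omega) h2 hcon
          omega
      obtain ⟨gaps, g1, g2, g3, g4, g5, g6, g7⟩ := ih (t+1) (path ++ [F (t+1)])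
        (by omega) (by omega) (by omega) hne' hchain' hnodup' hlast' havoid'
      refine ⟨(s, t) :: gaps, ?_, ?_, ?_, ?_, ?_, ?_, ?_⟩
      · simp only [List.length_append, List.length_singleton, List.length_cons] at g1 ⊢
        omega
      · intro gp hgp
        rcases List.mem_cons.mp hgp with rfl | hgp
        · exact ⟨le_rfl, by omega, by omega⟩
        · have := g2 gp hgp
          exact ⟨by omega, this.2.1, this.2.2⟩
      · intro p h1 h2
        by_cases hpt : p < t
        · exact Or.inl ⟨(s, t), by simp, h1, hpt⟩
        · by_cases hpt' : p = t
          · exact Or.inr ⟨(s, t), by simp, hpt', hthi⟩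
          · rcases g3 p (by omega) h2 with ⟨gp, hgp, hc⟩ | ⟨gp, hgp, hc⟩
            · exact Or.inl ⟨gp, List.mem_cons_of_mem _ hgp, hc⟩
            · exact Or.inr ⟨gp, List.mem_cons_of_mem _ hgp, hc⟩
      · obtain ⟨gp, hgp, hc⟩ := g4
        exact ⟨gp, List.mem_cons_of_mem _ hgp, hc⟩
      · intro gp hgp
        rcases List.mem_cons.mp hgp with rfl | hgp
        · obtain ⟨γ, hγ, hm⟩ := hmiss
          refine ⟨γ, hγ, ?_⟩
          intro u h1 h2 h3
          dsimp only at h2 h3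
          by_cases huj : u < j
          · exact hm u h1 h2 huj
          · exact absurd (htmin u h1 (by omega) (by omega)) (by omega)
        · exact g5 gp hgp
      · simp only [List.map_cons, List.pairwise_cons]
        refine ⟨?_, g6⟩
        intro b hb
        simp only [List.mem_map] at hb
        obtain ⟨gp, hgp, rfl⟩ := hb
        have := g2 gp hgp
        omega
      · rw [List.pairwise_cons]
        refine ⟨?_, g7⟩
        intro gp hgp
        have := g2 gp hgp
        dsimp only
        omega
    · -- stop: final gap (s, hi)
      refine ⟨[(s, hi)], ?_, ?_, ?_, ?_, ?_, ?_, ?_⟩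
      · have := hdep path hchain hnodup
        simp only [List.length_singleton]
        omega
      · simp only [List.mem_singleton, forall_eq]
        exact ⟨le_rfl, hshi, le_rfl⟩
      · intro p h1 h2
        exact Or.inl ⟨(s, hi), by simp, h1, h2⟩
      · exact ⟨(s, hi), by simp, rfl⟩
      · intro gp hgp
        simp only [List.mem_singleton] at hgp
        subst hgp
        obtain ⟨γ, hγ, hm⟩ := hmiss
        refine ⟨γ, hγ, ?_⟩
        intro u h1 h2 h3
        dsimp only at h2 h3
        by_cases huj : u < j
        · exact hm u h1 h2 huj
        · exfalso
          rw [Finset.not_nonempty_iff_eq_empty] at hB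
          have hcon : u ∈ S.filter (fun v => j ≤ v ∧ v < hi) := by
            simp only [Finset.mem_filter]
            exact ⟨h1, by omega, h3⟩
          rw [hB] at hcon
          simp at hcon
      · simp
      · simp

end Factorization

section Counting

variable {σ0 σ1 : Type*}

/-- a cycle within `[lo,hi]` of the (lazy) run `F`, whose label covers `Γ` using positions `S`. -/
def CycM (lett : ℕ → α) {σ : Type*} (F : ℕ → σ) (S : Finset ℕ) (lo hi : ℕ) (Γ : Finset α) : Prop :=
  ∃ a b, lo ≤ a ∧ a ≤ b ∧ b ≤ hi ∧ F a = F b ∧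
    ∀ γ ∈ Γ, ∃ t, t ∈ S ∧ a ≤ t ∧ t < b ∧ lett t = γ

variable (lett : ℕ → α) (P : ℕ → Finset ℕ) (F0 : ℕ → ℕ → σ0) (F1 : ℕ → ℕ → σ1)

def Cyc (i lo hi : ℕ) (Γ : Finset α) : Prop :=
  (i % 2 = 0 ∧ CycM lett (F0 i) (P i) lo hi Γ) ∨ (i % 2 = 1 ∧ CycM lett (F1 i) (P i) lo hi Γ)

def SAT (i lo hi : ℕ) (Γ : Finset α) : Prop :=
  Cyc lett P F0 F1 i lo hi Γ ∧ Cyc lett P F0 F1 (i+1) lo hi Γ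

def SatCover : ℕ → Finset α → ℕ → ℕ → ℕ → Prop
  | 0, Γ, lo, hi, i => SAT lett P F0 F1 i lo hi Γ
  | (g+1), Γ, lo, hi, i => SAT lett P F0 F1 i lo hi Γ ∨
      ∃ zs : List (ℕ × ℕ × Finset α),
        (∀ z ∈ zs, lo ≤ z.1 ∧ z.1 ≤ z.2.1 ∧ z.2.1 ≤ hi ∧
          (∀ t ∈ P (i+1), z.1 ≤ t → t < z.2.1 → lett t ∈ z.2.2) ∧
          SatCover g z.2.2 z.1 z.2.1 i) ∧
        zs.Pairwise (fun z z' => z.2.1 ≤ z'.1) ∧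
        (∀ p ∈ P (i+1), p ∉ P i → lo ≤ p → p < hi → ∃ z ∈ zs, z.1 ≤ p ∧ p < z.2.1)

theorem satCover_extract :
    ∀ (g : ℕ) (Γ : Finset α) (lo hi i : ℕ), SatCover lett P F0 F1 g Γ lo hi i →
    lo ≤ hi →
    (∀ t ∈ P (i+1), lo ≤ t → t < hi → lett t ∈ Γ) →
    ∃ zs : List (ℕ × ℕ × Finset α),
      (∀ z ∈ zs, lo ≤ z.1 ∧ z.1 ≤ z.2.1 ∧ z.2.1 ≤ hi ∧
        (∀ t ∈ P (i+1), z.1 ≤ t → t < z.2.1 → lett t ∈ z.2.2) ∧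
        SAT lett P F0 F1 i z.1 z.2.1 z.2.2) ∧
      zs.Pairwise (fun z z' => z.2.1 ≤ z'.1) ∧
      (∀ p ∈ P (i+1), p ∉ P i → lo ≤ p → p < hi → ∃ z ∈ zs, z.1 ≤ p ∧ p < z.2.1) := by
  intro g
  induction g with
  | zero =>
    intro Γ lo hi i hsc hlohi hlets
    exact ⟨[(lo, hi, Γ)], by
      intro z hz
      simp only [List.mem_singleton] at hz
      subst hz
      exact ⟨le_rfl, hlohi, le_rfl, hlets, hsc⟩, by simp,
      fun p h1 h2 h3 h4 => ⟨(lo, hi, Γ), by simp, h3, h4⟩⟩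
  | succ g ih =>
    intro Γ lo hi i hsc hlohi hlets
    rcases hsc with hsat | ⟨zs, hz, hpair, hcov⟩
    · exact ⟨[(lo, hi, Γ)], by
        intro z hz
        simp only [List.mem_singleton] at hz
        subst hz
        exact ⟨le_rfl, hlohi, le_rfl, hlets, hsat⟩, by simp,
        fun p h1 h2 h3 h4 => ⟨(lo, hi, Γ), by simp, h3, h4⟩⟩
    · -- extract recursively from each zone and flatten
      have flatten : ∀ zs' : List (ℕ × ℕ × Finset α),
          (∀ z ∈ zs', lo ≤ z.1 ∧ z.1 ≤ z.2.1 ∧ z.2.1 ≤ hi ∧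
            (∀ t ∈ P (i+1), z.1 ≤ t → t < z.2.1 → lett t ∈ z.2.2) ∧
            SatCover lett P F0 F1 g z.2.2 z.1 z.2.1 i) →
          zs'.Pairwise (fun z z' => z.2.1 ≤ z'.1) →
          ∃ flat : List (ℕ × ℕ × Finset α),
            (∀ w ∈ flat, lo ≤ w.1 ∧ w.1 ≤ w.2.1 ∧ w.2.1 ≤ hi ∧
              (∀ t ∈ P (i+1), w.1 ≤ t → t < w.2.1 → lett t ∈ w.2.2) ∧
              SAT lett P F0 F1 i w.1 w.2.1 w.2.2) ∧
            (∀ w ∈ flat, ∃ z ∈ zs', z.1 ≤ w.1 ∧ w.2.1 ≤ z.2.1) ∧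
            flat.Pairwise (fun z z' => z.2.1 ≤ z'.1) ∧
            (∀ p ∈ P (i+1), p ∉ P i → (∃ z ∈ zs', z.1 ≤ p ∧ p < z.2.1) →
              ∃ w ∈ flat, w.1 ≤ p ∧ p < w.2.1) := by
        intro zs'
        induction zs' with
        | nil =>
          intro _ _
          refine ⟨[], by simp, by simp, by simp, ?_⟩
          intro p _ _ hex
          obtain ⟨z, hz0, _⟩ := hex
          exact absurd hz0 List.not_mem_nil
        | cons z rest ihz =>
          intro hprops hpair'
          obtain ⟨hzlo, hzz, hzhi, hzlets, hzsc⟩ := hprops z (List.mem_cons_self)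
          obtain ⟨flat1, hf1, hf1pair, hf1cov⟩ := ih z.2.2 z.1 z.2.1 i hzsc hzz hzlets
          obtain ⟨flat2, hf2, hf2in, hf2pair, hf2cov⟩ :=
            ihz (fun z' hz' => hprops z' (List.mem_cons_of_mem _ hz'))
              (List.pairwise_cons.mp hpair').2
          refine ⟨flat1 ++ flat2, ?_, ?_, ?_, ?_⟩
          · intro w hw
            rcases List.mem_append.mp hw with hw | hw
            · obtain ⟨w1, w2, w3, w4, w5⟩ := hf1 w hw
              exact ⟨by omega, w2, by omega, w4, w5⟩
            · exact hf2 w hw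
          · intro w hw
            rcases List.mem_append.mp hw with hw | hw
            · obtain ⟨w1, w2, w3, _, _⟩ := hf1 w hw
              exact ⟨z, List.mem_cons_self, w1, w3⟩
            · obtain ⟨z', hz', h1, h2⟩ := hf2in w hw
              exact ⟨z', List.mem_cons_of_mem _ hz', h1, h2⟩
          · rw [List.pairwise_append]
            refine ⟨hf1pair, hf2pair, ?_⟩
            intro w1 hw1 w2 hw2
            obtain ⟨_, _, hw13, _, _⟩ := hf1 w1 hw1
            obtain ⟨z', hz', hc1, _⟩ := hf2in w2 hw2
            have := (List.pairwise_cons.mp hpair').1 z' hz'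
            omega
          · intro p hp1 hp2 hex
            obtain ⟨z', hz', h1, h2⟩ := hex
            rcases List.mem_cons.mp hz' with rfl | hz'
            · obtain ⟨w, hw, hc⟩ := hf1cov p hp1 hp2 h1 h2
              exact ⟨w, List.mem_append_left _ hw, hc⟩
            · obtain ⟨w, hw, hc⟩ := hf2cov p hp1 hp2 ⟨z', hz', h1, h2⟩
              exact ⟨w, List.mem_append_right _ hw, hc⟩
      obtain ⟨flat, hf, _, hfpair, hfcov⟩ := flatten zs hz hpair
      refine ⟨flat, hf, hfpair, ?_⟩
      intro p h1 h2 h3 h4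
      exact hfcov p h1 h2 (hcov p h1 h2 h3 h4)

theorem mem_foldr_union {β γ : Type*} [DecidableEq γ] (l : List β) (f : β → Finset γ) (a : γ) :
    a ∈ l.foldr (fun x acc => f x ∪ acc) ∅ ↔ ∃ x ∈ l, a ∈ f x := by
  induction l with
  | nil => simp
  | cons x l ihl =>
    simp only [List.foldr_cons, Finset.mem_union, ihl, List.mem_cons]
    constructor
    · rintro (h | ⟨y, hy, ha⟩)
      · exact ⟨x, Or.inl rfl, h⟩
      · exact ⟨y, Or.inr hy, ha⟩
    · rintro ⟨y, rfl | hy, ha⟩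
      · exact Or.inl ha
      · exact Or.inr ⟨y, hy, ha⟩

theorem foldr_union_card {β γ : Type*} [DecidableEq γ] (l : List β) (f : β → Finset γ) (B : ℕ)
    (h : ∀ x ∈ l, (f x).card ≤ B) :
    (l.foldr (fun x acc => f x ∪ acc) ∅).card ≤ l.length * B := by
  induction l with
  | nil => simp
  | cons x l ihl =>
    simp only [List.foldr_cons, List.length_cons]
    calc (f x ∪ l.foldr (fun x acc => f x ∪ acc) ∅).card
        ≤ (f x).card + (l.foldr (fun x acc => f x ∪ acc) ∅).card := Finset.card_union_le _ _
      _ ≤ B + l.length * B := by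
          have h1 := h x (List.mem_cons_self)
          have h2 := ihl (fun y hy => h y (List.mem_cons_of_mem _ hy))
          omega
      _ ≤ (l.length + 1) * B := by ring_nf; omega

theorem sat_trivial (i lo : ℕ) : SAT lett P F0 F1 i lo lo ∅ := by
  constructor <;>
  · rcases Nat.mod_two_eq_zero_or_one _ with h | h
    · exact Or.inl ⟨h, lo, lo, le_rfl, le_rfl, le_rfl, rfl, by simp⟩
    · exact Or.inr ⟨h, lo, lo, le_rfl, le_rfl, le_rfl, rfl, by simp⟩

theorem satCover_trivial (g i lo : ℕ) : SatCover lett P F0 F1 g ∅ lo lo i := by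
  cases g with
  | zero => exact sat_trivial lett P F0 F1 i lo
  | succ g => exact Or.inl (sat_trivial lett P F0 F1 i lo)

noncomputable def cfilter (p : ℕ → Prop) (s : Finset ℕ) : Finset ℕ :=
  @Finset.filter _ p (fun _ => Classical.propDecidable _) s

theorem mem_cfilter {p : ℕ → Prop} {s : Finset ℕ} {i : ℕ} :
    i ∈ cfilter p s ↔ i ∈ s ∧ p i :=
  @Finset.mem_filter _ p (fun _ => Classical.propDecidable _) s i

theorem counting {n : ℕ} (hn : 1 ≤ n) {r N : ℕ}
    {A0 : NFA α σ0} {A1 : NFA α σ1}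
    (hdep0 : DepthLEx A0 n) (hdep1 : DepthLEx A1 n)
    (hrun0 : ∀ i, 1 ≤ i → i ≤ r → i % 2 = 0 → LRun A0 lett (P i) (F0 i) 0 N)
    (hrun1 : ∀ i, 1 ≤ i → i ≤ r → i % 2 = 1 → LRun A1 lett (P i) (F1 i) 0 N)
    (hPmono : ∀ i j, 1 ≤ i → i ≤ j → j ≤ r → P i ⊆ P j) :
    ∀ (g : ℕ) (Γ : Finset α), Γ.card ≤ g → ∀ lo hi h, 1 ≤ h → h ≤ r → lo ≤ hi → hi ≤ N →
    (∀ i, 1 ≤ i → i ≤ h → ∀ t ∈ P i, lo ≤ t → t < hi → lett t ∈ Γ) →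
    ∀ T : Finset ℕ,
    (∀ i ∈ T, (1 ≤ i ∧ i < h) ∧ (∃ p ∈ P (i+1), p ∉ P i ∧ lo ≤ p ∧ p < hi) ∧
        ¬ SatCover lett P F0 F1 g Γ lo hi i) →
    T.card ≤ ∑ d ∈ Finset.range g, n^(d+1) := by
  classical
  intro g
  induction g with
  | zero =>
    intro Γ hcard lo hi h hh1 hhr hlohi hhiN hinv T hTmem
    have hΓ : Γ = ∅ := Finset.card_eq_zero.mp (Nat.le_zero.mp hcard)
    have hempty : T = ∅ := by
      rw [Finset.eq_empty_iff_forall_notMem]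
      intro i hi
      obtain ⟨⟨hi1, hih⟩, ⟨p, hp1, hp2, hp3, hp4⟩, _⟩ := hTmem i hi
      have := hinv (i+1) (by omega) (by omega) p hp1 hp3 hp4
      rw [hΓ] at this
      simp at this
    rw [hempty]
    simp
  | succ g ih =>
    intro Γ hcard lo hi h hh1 hhr hlohi hhiN hinv T hT
    have hTmem : ∀ i ∈ T, (1 ≤ i ∧ i < h) ∧
        (∃ p ∈ P (i+1), p ∉ P i ∧ lo ≤ p ∧ p < hi) ∧
        ¬ SAT lett P F0 F1 i lo hi Γ ∧
        ¬ ∃ zs : List (ℕ × ℕ × Finset α),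
          (∀ z ∈ zs, lo ≤ z.1 ∧ z.1 ≤ z.2.1 ∧ z.2.1 ≤ hi ∧
            (∀ t ∈ P (i+1), z.1 ≤ t → t < z.2.1 → lett t ∈ z.2.2) ∧
            SatCover lett P F0 F1 g z.2.2 z.1 z.2.1 i) ∧
          zs.Pairwise (fun z z' => z.2.1 ≤ z'.1) ∧
          (∀ p ∈ P (i+1), p ∉ P i → lo ≤ p → p < hi → ∃ z ∈ zs, z.1 ≤ p ∧ p < z.2.1) := by
      intro i hi
      obtain ⟨h1, h3, h4⟩ := hT i hi
      exact ⟨h1, h3, fun hs => h4 (Or.inl hs), fun hf => h4 (Or.inr hf)⟩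
    by_cases hΓne : Γ.Nonempty
    swap
    · rw [Finset.not_nonempty_iff_eq_empty] at hΓne
      have hempty : T = ∅ := by
        rw [Finset.eq_empty_iff_forall_notMem]
        intro i hi
        obtain ⟨⟨h1, h2⟩, ⟨p, hp1, hp2, hp3, hp4⟩, _, _⟩ := hTmem i hi
        have := hinv (i+1) (by omega) (by omega) p hp1 hp3 hp4
        rw [hΓne] at this
        simp at this
      rw [hempty]
      simp
    set A := cfilter (fun jj => ¬ Cyc lett P F0 F1 jj lo hi Γ) (Finset.Icc 1 h) with hA
    by_cases hAne : A.Nonempty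
    swap
    · have hempty : T = ∅ := by
        rw [Finset.eq_empty_iff_forall_notMem]
        intro i hiT
        obtain ⟨⟨h1, h2⟩, _, h4, _⟩ := hTmem i hiT
        have h4' : ¬ (Cyc lett P F0 F1 i lo hi Γ ∧ Cyc lett P F0 F1 (i+1) lo hi Γ) := h4
        clear h4
        have h4 := h4'
        rw [not_and_or] at h4
        apply hAne
        rcases h4 with h4 | h4
        · refine ⟨i, ?_⟩
          rw [hA, mem_cfilter, Finset.mem_Icc]
          exact ⟨⟨h1, by omega⟩, h4⟩
        · refine ⟨i+1, ?_⟩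
          rw [hA, mem_cfilter, Finset.mem_Icc]
          exact ⟨⟨by omega, by omega⟩, h4⟩
      rw [hempty]
      simp
    · set τ := A.max' hAne with hτ
      have hτmem : τ ∈ A := A.max'_mem hAne
      rw [hA, mem_cfilter, Finset.mem_Icc] at hτmem
      obtain ⟨⟨hτ1, hτh⟩, hτnc⟩ := hτmem
      have hτmax : ∀ jj, 1 ≤ jj → jj ≤ h → ¬ Cyc lett P F0 F1 jj lo hi Γ → jj ≤ τ := by
        intro jj h1 h2 h3
        apply A.le_max' jj
        rw [hA, mem_cfilter, Finset.mem_Icc]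
        exact ⟨⟨h1, h2⟩, h3⟩
      have hfact : ∃ gaps : List (ℕ × ℕ),
          1 + gaps.length ≤ n + 1 ∧
          (∀ gp ∈ gaps, lo ≤ gp.1 ∧ gp.1 ≤ gp.2 ∧ gp.2 ≤ hi) ∧
          (∀ p, lo ≤ p → p < hi →
            (∃ gp ∈ gaps, gp.1 ≤ p ∧ p < gp.2) ∨ (∃ gp ∈ gaps, p = gp.2 ∧ gp.2 < hi)) ∧
          (∃ gp ∈ gaps, gp.2 = hi) ∧
          (∀ gp ∈ gaps, ∃ γ ∈ Γ, ∀ u, u ∈ P τ → gp.1 ≤ u → u < gp.2 → lett u ≠ γ) ∧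
          (gaps.map Prod.snd).Pairwise (· < ·) ∧
          gaps.Pairwise (fun x y => x.2 ≤ y.1) := by
        rcases Nat.mod_two_eq_zero_or_one τ with hp2 | hp2
        · have hnc : ¬ CycM lett (F0 τ) (P τ) lo hi Γ := fun hc => hτnc (Or.inl ⟨hp2, hc⟩)
          exact factorization lett hdep0 (hrun0 τ hτ1 (by omega) hp2) hlohi hhiN hnc
        · have hnc : ¬ CycM lett (F1 τ) (P τ) lo hi Γ := fun hc => hτnc (Or.inr ⟨hp2, hc⟩)
          exact factorization lett hdep1 (hrun1 τ hτ1 (by omega) hp2) hlohi hhiN hnc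
      obtain ⟨gaps, g1, g2, g3, g4, g5, g6, g7⟩ := hfact
      set γch : ℕ × ℕ → α := fun gp =>
        if hc : ∃ γ, γ ∈ Γ ∧ ∀ u, u ∈ P τ → gp.1 ≤ u → u < gp.2 → lett u ≠ γ
        then hc.choose else hΓne.choose with hγch
      have hγboth : ∀ gp ∈ gaps, γch gp ∈ Γ ∧
          ∀ u, u ∈ P τ → gp.1 ≤ u → u < gp.2 → lett u ≠ γch gp := by
        intro gp hgp
        obtain ⟨γ, hγ1, hγ2⟩ := g5 gp hgp
        have hc : ∃ γ, γ ∈ Γ ∧ ∀ u, u ∈ P τ → gp.1 ≤ u → u < gp.2 → lett u ≠ γ :=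
          ⟨γ, hγ1, hγ2⟩
        rw [hγch]
        dsimp only
        rw [dif_pos hc]
        exact ⟨hc.choose_spec.1, hc.choose_spec.2⟩
      have hγmem : ∀ gp ∈ gaps, γch gp ∈ Γ := fun gp hgp => (hγboth gp hgp).1
      have hγmiss : ∀ gp ∈ gaps, ∀ u, u ∈ P τ → gp.1 ≤ u → u < gp.2 → lett u ≠ γch gp :=
        fun gp hgp => (hγboth gp hgp).2
      set Tchild : ℕ × ℕ → Finset ℕ := fun gp =>
        cfilter (fun i =>
          (∃ p ∈ P (i+1), p ∉ P i ∧ gp.1 ≤ p ∧ p < gp.2) ∧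
          ¬ SatCover lett P F0 F1 g (Γ.erase (γch gp)) gp.1 gp.2 i) (Finset.Ico 1 τ)
        with hTchild
      have hchild : ∀ gp ∈ gaps, (Tchild gp).card ≤ ∑ d ∈ Finset.range g, n^(d+1) := by
        intro gp hgp
        apply ih (Γ.erase (γch gp))
          (by
            have h1 : γch gp ∈ Γ := hγmem gp hgp
            rw [Finset.card_erase_of_mem h1]
            omega)
          gp.1 gp.2 τ hτ1 (by omega) (g2 gp hgp).2.1 (by have := g2 gp hgp; omega)
        · intro i h1 h2 t ht h3 h4
          rw [Finset.mem_erase]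
          have htτ : t ∈ P τ := hPmono i τ h1 h2 (by omega) ht
          constructor
          · exact hγmiss gp hgp t htτ h3 h4
          · have := g2 gp hgp
            exact hinv i h1 (by omega) t ht (by omega) (by omega)
        · intro i hi
          rw [hTchild] at hi
          dsimp only at hi
          rw [mem_cfilter, Finset.mem_Ico] at hi
          exact ⟨hi.1, hi.2⟩
      set CUTF := ((gaps.map Prod.snd).toFinset).erase hi with hCUTF
      have hhiin : hi ∈ (gaps.map Prod.snd).toFinset := by
        obtain ⟨gp, hgp, hc⟩ := g4
        rw [List.mem_toFinset, List.mem_map]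
        exact ⟨gp, hgp, hc⟩
      have hcutcard : CUTF.card ≤ n - 1 := by
        rw [hCUTF, Finset.card_erase_of_mem hhiin]
        have h1 : (gaps.map Prod.snd).toFinset.card ≤ gaps.length := by
          calc (gaps.map Prod.snd).toFinset.card ≤ (gaps.map Prod.snd).length :=
              (gaps.map Prod.snd).toFinset_card_le
            _ = gaps.length := by rw [List.length_map]
        omega
      set CUTSTEPS := cfilter
        (fun i => ∃ p, p ∈ CUTF ∧ p ∈ P (i+1) ∧ p ∉ P i) (Finset.Ico 1 h) with hCUTSTEPS
      have hcsteps : CUTSTEPS.card ≤ CUTF.card := by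
        apply Finset.card_le_card_of_injOn
          (fun i => if hc : ∃ p, p ∈ CUTF ∧ p ∈ P (i+1) ∧ p ∉ P i then hc.choose else 0)
        · intro i hi
          rw [hCUTSTEPS, Finset.mem_coe, mem_cfilter] at hi
          dsimp only
          rw [dif_pos hi.2]
          exact hi.2.choose_spec.1
        · intro i hi i' hi' heq
          rw [hCUTSTEPS, Finset.mem_coe, mem_cfilter, Finset.mem_Ico] at hi hi'
          dsimp only at heq
          rw [dif_pos hi.2, dif_pos hi'.2] at heq
          by_contra hne
          rcases Nat.lt_or_ge i i' with hlt | hge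
          · have c1 := hi.2.choose_spec
            have c2 := hi'.2.choose_spec
            rw [heq] at c1
            exact c2.2.2 (hPmono (i+1) i' (by omega) (by omega) (by omega) c1.2.1)
          · have hlt : i' < i := by omega
            have c1 := hi.2.choose_spec
            have c2 := hi'.2.choose_spec
            rw [← heq] at c2
            exact c1.2.2 (hPmono (i'+1) i (by omega) (by omega) (by omega) c2.2.1)
      set S3 := gaps.foldr (fun gp acc => Tchild gp ∪ acc) ∅ with hS3
      have hincl : T ⊆ insert τ (CUTSTEPS ∪ S3) := by
        intro i hiT
        obtain ⟨⟨h1, h2⟩, ⟨p0, hp01, hp02, hp03, hp04⟩, hnsat, hnfam⟩ := hTmem i hiT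
        have hiτ : i ≤ τ := by
          have hnsat' : ¬ (Cyc lett P F0 F1 i lo hi Γ ∧ Cyc lett P F0 F1 (i+1) lo hi Γ) := hnsat
          clear hnsat
          have hnsat := hnsat'
          rw [not_and_or] at hnsat
          rcases hnsat with h4 | h4
          · exact hτmax i h1 (by omega) h4
          · have := hτmax (i+1) (by omega) (by omega) h4
            omega
        rcases eq_or_lt_of_le hiτ with rfl | hilt
        · exact Finset.mem_insert_self _ _
        · apply Finset.mem_insert_of_mem
          rw [Finset.mem_union]
          set fam := gaps.map (fun gp =>
            if SatCover lett P F0 F1 g (Γ.erase (γch gp)) gp.1 gp.2 i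
            then (gp.1, gp.2, Γ.erase (γch gp)) else (gp.1, gp.1, (∅ : Finset α))) with hfam
          have hfamprops : ∀ z ∈ fam, lo ≤ z.1 ∧ z.1 ≤ z.2.1 ∧ z.2.1 ≤ hi ∧
              (∀ t ∈ P (i+1), z.1 ≤ t → t < z.2.1 → lett t ∈ z.2.2) ∧
              SatCover lett P F0 F1 g z.2.2 z.1 z.2.1 i := by
            intro z hz
            rw [hfam, List.mem_map] at hz
            obtain ⟨gp, hgp, rfl⟩ := hz
            by_cases hsc : SatCover lett P F0 F1 g (Γ.erase (γch gp)) gp.1 gp.2 i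
            · rw [if_pos hsc]
              have hb := g2 gp hgp
              refine ⟨hb.1, hb.2.1, hb.2.2, ?_, hsc⟩
              intro t ht h3 h4
              have h3' : gp.1 ≤ t := h3
              have h4' : t < gp.2 := h4
              rw [Finset.mem_erase]
              have htτ : t ∈ P τ := hPmono (i+1) τ (by omega) (by omega) (by omega) ht
              exact ⟨hγmiss gp hgp t htτ h3' h4', hinv (i+1) (by omega) (by omega) t ht
                (by omega) (by omega)⟩
            · rw [if_neg hsc]
              have hb := g2 gp hgp
              refine ⟨hb.1, le_rfl, ?_, ?_, satCover_trivial lett P F0 F1 g i gp.1⟩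
              · show gp.1 ≤ hi
                omega
              · intro t ht h3 h4
                have h3' : gp.1 ≤ t := h3
                have h4' : t < gp.1 := h4
                exact absurd h4' (by omega)
          have hfampair : fam.Pairwise (fun z z' => z.2.1 ≤ z'.1) := by
            rw [hfam, List.pairwise_map]
            apply List.Pairwise.imp_of_mem ?_ g7
            intro x y hx hy hxy
            have hbx := g2 x hx
            have hby := g2 y hy
            by_cases hscx : SatCover lett P F0 F1 g (Γ.erase (γch x)) x.1 x.2 i <;>
              by_cases hscy : SatCover lett P F0 F1 g (Γ.erase (γch y)) y.1 y.2 i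
            · rw [if_pos hscx, if_pos hscy]; exact hxy
            · rw [if_pos hscx, if_neg hscy]; exact hxy
            · rw [if_neg hscx, if_pos hscy]
              show x.1 ≤ y.1
              omega
            · rw [if_neg hscx, if_neg hscy]
              show x.1 ≤ y.1
              omega
          have hcovfail : ∃ p ∈ P (i+1), p ∉ P i ∧ lo ≤ p ∧ p < hi ∧
              ∀ z ∈ fam, ¬ (z.1 ≤ p ∧ p < z.2.1) := by
            by_contra hcon
            push_neg at hcon
            apply hnfam
            refine ⟨fam, hfamprops, hfampair, ?_⟩
            intro p hp1 hp2 hp3 hp4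
            obtain ⟨z, hz, hc⟩ := hcon p hp1 hp2 hp3 hp4
            exact ⟨z, hz, hc⟩
          obtain ⟨p, hp1, hp2, hp3, hp4, hp5⟩ := hcovfail
          rcases g3 p hp3 hp4 with ⟨gp, hgp, hc1, hc2⟩ | ⟨gp, hgp, hc1, hc2⟩
          · right
            have hscf : ¬ SatCover lett P F0 F1 g (Γ.erase (γch gp)) gp.1 gp.2 i := by
              intro hsc
              apply hp5 ((gp.1, gp.2, Γ.erase (γch gp)))
              · rw [hfam, List.mem_map]
                exact ⟨gp, hgp, by rw [if_pos hsc]⟩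
              · exact ⟨hc1, hc2⟩
            rw [hS3, mem_foldr_union]
            refine ⟨gp, hgp, ?_⟩
            rw [hTchild]
            dsimp only
            rw [mem_cfilter, Finset.mem_Ico]
            exact ⟨⟨h1, hilt⟩, ⟨p, hp1, hp2, hc1, hc2⟩, hscf⟩
          · left
            rw [hCUTSTEPS, mem_cfilter, Finset.mem_Ico]
            refine ⟨⟨h1, h2⟩, p, ?_, hp1, hp2⟩
            rw [hCUTF, Finset.mem_erase, List.mem_toFinset, List.mem_map]
            exact ⟨by omega, gp, hgp, hc1.symm⟩
      calc T.card ≤ (insert τ (CUTSTEPS ∪ S3)).card := Finset.card_le_card hincl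
        _ ≤ (CUTSTEPS ∪ S3).card + 1 := Finset.card_insert_le _ _
        _ ≤ (CUTSTEPS.card + S3.card) + 1 := by
            have := Finset.card_union_le CUTSTEPS S3
            omega
        _ ≤ ((n-1) + gaps.length * (∑ d ∈ Finset.range g, n^(d+1))) + 1 := by
            have h1 : S3.card ≤ gaps.length * (∑ d ∈ Finset.range g, n^(d+1)) :=
              foldr_union_card gaps Tchild _ hchild
            omega
        _ ≤ ∑ d ∈ Finset.range (g+1), n^(d+1) := by
            have h1 : gaps.length ≤ n := by omega
            have h2 : gaps.length * (∑ d ∈ Finset.range g, n^(d+1)) ≤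
                n * (∑ d ∈ Finset.range g, n^(d+1)) :=
              Nat.mul_le_mul_right _ h1
            have h3 : ∑ d ∈ Finset.range (g+1), n^(d+1) =
                (∑ d ∈ Finset.range g, n^(d+1+1)) + n^(0+1) :=
              Finset.sum_range_succ' (fun d => n^(d+1)) g
            have h4 : n * (∑ d ∈ Finset.range g, n^(d+1)) = ∑ d ∈ Finset.range g, n^(d+1+1) := by
              rw [Finset.mul_sum]
              apply Finset.sum_congr rfl
              intro d _
              ring
            rw [h3, ← h4]
            have h5 : n^(0+1) = n := by ring
            rw [h5]
            omega

end Counting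

section Glue

theorem pick_take (l : List α) (d : α) :
    ∀ k, k ≤ l.length →
      pick (fun t => l.getD t d) (Finset.range l.length) 0 k = l.take k := by
  intro k
  induction k with
  | zero => simp [pick]
  | succ k ihk =>
    intro hk
    have e1 : pick (fun t => l.getD t d) (Finset.range l.length) 0 (k+1) =
        pick (fun t => l.getD t d) (Finset.range l.length) 0 k ++
        pick (fun t => l.getD t d) (Finset.range l.length) (0 + k) 1 :=
      pick_append _ _ 0 k 1
    rw [Nat.zero_add] at e1
    rw [e1, ihk (by omega)]
    have hkl : k < l.length := by omega
    have e2 : pick (fun t => l.getD t d) (Finset.range l.length) k 1 = [l.getD k d] := by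
      simp [pick, Finset.mem_range, hkl]
    rw [e2, List.take_succ]
    congr 1
    rw [List.getElem?_eq_getElem hkl]
    simp only [Option.toList_some]
    congr 1
    rw [List.getD_eq_getElem?_getD, List.getElem?_eq_getElem hkl]
    rfl

theorem pick_full (l : List α) (d : α) :
    pick (fun t => l.getD t d) (Finset.range l.length) 0 l.length = l := by
  rw [pick_take l d l.length le_rfl, List.take_length]

end Glue

end TowerProof


/-- An infinite alternating subsequence tower between `K` and `L`. -/
def InfSubTower {α : Type*} (K L : Set (List α)) (w : ℕ → List α) : Prop :=
  w 0 ∈ K ∪ L ∧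
    ∀ i, (w i).Sublist (w (i + 1)) ∧
      (w i ∈ K → w (i + 1) ∈ L) ∧ (w i ∈ L → w (i + 1) ∈ K)

/-- The NFA `M` has depth at most `n`: every simple path (a sequence of pairwise
distinct states consecutively joined by transitions) has at most `n` states. -/
def DepthLE {α σ : Type*} (M : NFA α σ) (n : ℕ) : Prop :=
  ∀ l : List σ, l.Chain' (fun p q => ∃ c, q ∈ M.step p c) → l.Nodup →
    l.length ≤ n

/-- Theorem: if `A₀` and `A₁` are NFAs over an alphabet of cardinality `m`, both of
depth at most `n`, with no infinite alternating subsequence tower between their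
languages, then every tower `w₁ ≼ w₂ ≼ ⋯ ≼ w_r` with `w_i ∈ L(A_{i mod 2})`
satisfies `r ≤ (n^{m+1} − 1)/(n − 1) = ∑_{i=0}^{m} n^i`. -/
theorem tower_height_upper_bound {α σ0 σ1 : Type*} [Fintype α] (m n : ℕ)
    (hα : Fintype.card α = m)
    (A0 : NFA α σ0) (A1 : NFA α σ1)
    (h0 : DepthLE A0 n) (h1 : DepthLE A1 n)
    (hno : ¬ ∃ t : ℕ → List α,
      InfSubTower (A0.accepts : Set (List α)) (A1.accepts : Set (List α)) t)
    (r : ℕ) (w : ℕ → List α)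
    (hsub : ∀ i, 1 ≤ i → i < r → (w i).Sublist (w (i + 1)))
    (hmem : ∀ i, 1 ≤ i → i ≤ r →
      (i % 2 = 0 → w i ∈ (A0.accepts : Set (List α))) ∧
      (i % 2 = 1 → w i ∈ (A1.accepts : Set (List α)))) :
    r ≤ ∑ i ∈ Finset.range (m + 1), n ^ i := by
  classical
  open TowerProof in
  -- trivial bound when r ≤ 1
  have hsum1 : 1 ≤ ∑ i ∈ Finset.range (m + 1), n ^ i := by
    calc 1 = n ^ 0 := by rw [pow_zero]
      _ ≤ ∑ i ∈ Finset.range (m + 1), n ^ i :=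
        Finset.single_le_sum (f := fun i => n ^ i) (fun i _ => Nat.zero_le _)
          (Finset.mem_range.mpr (by omega))
  rcases Nat.lt_or_ge r 2 with hr2 | hr2
  · omega
  -- disjointness of the two languages
  have hdisj : ∀ u, u ∈ A0.accepts → u ∈ A1.accepts → False := by
    intro u hu0 hu1
    apply hno
    refine ⟨fun _ => u, Or.inl hu0, fun i => ⟨List.Sublist.refl u, fun _ => hu1, fun _ => hu0⟩⟩
  -- n ≥ 1
  rcases Nat.eq_zero_or_pos n with rfl | hn
  · exfalso
    obtain ⟨q, hq, _⟩ := (hmem 1 le_rfl (by omega)).2 rfl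
    have := h1 [q] (List.isChain_singleton q) (List.nodup_singleton q)
    simp at this
  -- m ≥ 1 (α nonempty)
  rcases Nat.eq_zero_or_pos m with rfl | hm
  · exfalso
    have hE : IsEmpty α := Fintype.card_eq_zero_iff.mp hα
    have h1' : w 1 = [] := by
      cases hw : w 1 with
      | nil => rfl
      | cons a _ => exact (hE.false a).elim
    have h2' : w 2 = [] := by
      cases hw : w 2 with
      | nil => rfl
      | cons a _ => exact (hE.false a).elim
    apply hdisj (w 2)
    · exact (hmem 2 (by omega) (by omega)).1 rfl
    · rw [h2', ← h1']
      exact (hmem 1 (by omega) (by omega)).2 rfl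
  have hαne : Nonempty α := Fintype.card_pos_iff.mp (by omega)
  set d : α := Classical.choice hαne with hd
  set l : List α := w r with hl
  set N : ℕ := l.length with hN
  set lett : ℕ → α := fun t => l.getD t d with hlett
  have hwr : w r = pick lett (Finset.range N) 0 N := (pick_full l d).symm
  -- nested position sets
  set Q : ℕ → Finset ℕ := fun k => Nat.rec (Finset.range N)
    (fun k Qk => if h : ∃ S ⊆ Qk, (∀ t ∈ S, 0 ≤ t ∧ t < 0 + N) ∧
        w (r - (k+1)) = pick lett S 0 N then h.choose else ∅) k with hQ
  have hQ0 : Q 0 = Finset.range N := rfl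
  have hQstep : ∀ k, Q (k+1) = if h : ∃ S ⊆ Q k, (∀ t ∈ S, 0 ≤ t ∧ t < 0 + N) ∧
      w (r - (k+1)) = pick lett S 0 N then h.choose else ∅ := fun k => rfl
  have hQgood : ∀ k, k ≤ r - 1 → (w (r - k) = pick lett (Q k) 0 N ∧
      (∀ t ∈ Q k, t < N) ∧ (∀ k', k' < k → Q k ⊆ Q k')) := by
    intro k
    induction k with
    | zero =>
      intro _
      refine ⟨by rw [Nat.sub_zero, hQ0]; exact hwr, ?_, fun k' hk' => by omega⟩
      intro t ht
      rw [hQ0, Finset.mem_range] at ht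
      exact ht
    | succ k ihk =>
      intro hk
      obtain ⟨ih1, ih2, ih3⟩ := ihk (by omega)
      have hsubk : w (r - (k+1)) <+ w (r - k) := by
        have e : r - k = (r - (k+1)) + 1 := by omega
        rw [e]
        exact hsub (r - (k+1)) (by omega) (by omega)
      rw [ih1] at hsubk
      obtain ⟨S, hS1, hS2, hS3⟩ := sublist_pick hsubk
      have hex : ∃ S ⊆ Q k, (∀ t ∈ S, 0 ≤ t ∧ t < 0 + N) ∧
          w (r - (k+1)) = pick lett S 0 N := ⟨S, hS1, fun t ht => ⟨Nat.zero_le _, (hS2 t ht).2⟩, hS3⟩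
      rw [hQstep k, dif_pos hex]
      obtain ⟨c1, c2, c3⟩ := hex.choose_spec
      refine ⟨c3, ?_, ?_⟩
      · intro t ht
        have := c2 t ht
        omega
      · intro k' hk'
        rcases Nat.lt_or_ge k' (k+1) with h' | h'
        · rcases Nat.eq_or_lt_of_le (by omega : k' ≤ k) with rfl | h''
          · exact c1
          · exact subset_trans c1 (ih3 k' h'')
        · omega
  set P : ℕ → Finset ℕ := fun i => Q (r - i) with hP
  have hPw : ∀ i, 1 ≤ i → i ≤ r → w i = pick lett (P i) 0 N := by
    intro i h1i hir
    have := (hQgood (r - i) (by omega)).1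
    rw [hP]
    have e : r - (r - i) = i := by omega
    rw [e] at this
    exact this
  have hPsub : ∀ i, 1 ≤ i → i ≤ r → ∀ t ∈ P i, t < N := by
    intro i h1i hir
    exact (hQgood (r - i) (by omega)).2.1
  have hPmono : ∀ i j, 1 ≤ i → i ≤ j → j ≤ r → P i ⊆ P j := by
    intro i j h1 h2 h3
    rcases Nat.eq_or_lt_of_le h2 with rfl | hlt
    · exact subset_refl _
    · exact (hQgood (r - i) (by omega)).2.2 (r - j) (by omega)
  -- runs: nonemptiness of the state spaces
  obtain ⟨qa0, _, _⟩ := (hmem 2 (by omega) (by omega)).1 rfl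
  obtain ⟨qa1, _, _⟩ := (hmem 1 (by omega) (by omega)).2 rfl
  have hσ0 : Nonempty σ0 := ⟨qa0⟩
  have hσ1 : Nonempty σ1 := ⟨qa1⟩
  set F0 : ℕ → ℕ → σ0 := fun i => if h : ∃ F : ℕ → σ0, F 0 ∈ A0.start ∧ F N ∈ A0.accept ∧
      LRun A0 lett (P i) F 0 N then h.choose else fun _ => Classical.choice hσ0 with hF0
  set F1 : ℕ → ℕ → σ1 := fun i => if h : ∃ F : ℕ → σ1, F 0 ∈ A1.start ∧ F N ∈ A1.accept ∧
      LRun A1 lett (P i) F 0 N then h.choose else fun _ => Classical.choice hσ1 with hF1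
  have hrunex0 : ∀ i, 1 ≤ i → i ≤ r → i % 2 = 0 → ∃ F : ℕ → σ0, F 0 ∈ A0.start ∧
      F N ∈ A0.accept ∧ LRun A0 lett (P i) F 0 N := by
    intro i h1 h2 h3
    obtain ⟨q, hq1, hq2⟩ := (hmem i h1 h2).1 h3
    rw [hPw i h1 h2] at hq2
    obtain ⟨F, hFa, hFb, hFc⟩ := exists_lrun hq2
    refine ⟨F, hFa, ?_, hFc⟩
    rw [show N = 0 + N from (Nat.zero_add N).symm, hFb]
    exact hq1
  have hrunex1 : ∀ i, 1 ≤ i → i ≤ r → i % 2 = 1 → ∃ F : ℕ → σ1, F 0 ∈ A1.start ∧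
      F N ∈ A1.accept ∧ LRun A1 lett (P i) F 0 N := by
    intro i h1 h2 h3
    obtain ⟨q, hq1, hq2⟩ := (hmem i h1 h2).2 h3
    rw [hPw i h1 h2] at hq2
    obtain ⟨F, hFa, hFb, hFc⟩ := exists_lrun hq2
    refine ⟨F, hFa, ?_, hFc⟩
    rw [show N = 0 + N from (Nat.zero_add N).symm, hFb]
    exact hq1
  have hrun0 : ∀ i, 1 ≤ i → i ≤ r → i % 2 = 0 → (F0 i) 0 ∈ A0.start ∧
      (F0 i) N ∈ A0.accept ∧ LRun A0 lett (P i) (F0 i) 0 N := by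
    intro i h1 h2 h3
    have hex := hrunex0 i h1 h2 h3
    rw [hF0]
    dsimp only
    rw [dif_pos hex]
    exact hex.choose_spec
  have hrun1 : ∀ i, 1 ≤ i → i ≤ r → i % 2 = 1 → (F1 i) 0 ∈ A1.start ∧
      (F1 i) N ∈ A1.accept ∧ LRun A1 lett (P i) (F1 i) 0 N := by
    intro i h1 h2 h3
    have hex := hrunex1 i h1 h2 h3
    rw [hF1]
    dsimp only
    rw [dif_pos hex]
    exact hex.choose_spec
  -- no step can be saturation-covered, else an infinite tower exists
  have hnosat : ∀ i, 1 ≤ i → i < r →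
      ¬ SatCover lett P F0 F1 m (Finset.univ : Finset α) 0 N i := by
    intro i h1 h2 hsc
    obtain ⟨zs, hzp, hzpair, hzcov⟩ := satCover_extract lett P F0 F1 m Finset.univ 0 N i hsc
      (Nat.zero_le N) (fun t _ _ _ => Finset.mem_univ _)
    have hpar : i % 2 = 0 ∧ (i+1) % 2 = 1 ∨ i % 2 = 1 ∧ (i+1) % 2 = 0 := by omega
    rcases hpar with ⟨hp, hp'⟩ | ⟨hp, hp'⟩
    · obtain ⟨hst, hac, hlr⟩ := hrun0 i h1 (by omega) hp
      obtain ⟨hst', hac', hlr'⟩ := hrun1 (i+1) (by omega) (by omega) hp'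
      apply hno
      refine trigger A0 A1 lett N (P i) (P (i+1)) (F0 i) (F1 (i+1))
        (hPmono i (i+1) h1 (by omega) (by omega)) hlr hlr' hst hac hst' hac' hdisj zs
        ?_ hzpair ?_ ?_ ?_
      · intro z hz
        exact ⟨(hzp z hz).2.1, (hzp z hz).2.2.1⟩
      · intro z hz
        exact (hzp z hz).2.2.2.1
      · intro z hz
        have hsat := (hzp z hz).2.2.2.2
        obtain ⟨hc1, hc2⟩ := hsat
        constructor
        · rcases hc1 with ⟨_, hc⟩ | ⟨hbad, _⟩
          · exact hc
          · omega
        · rcases hc2 with ⟨hbad, _⟩ | ⟨_, hc⟩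
          · omega
          · exact hc
      · intro p hp1 hp2 hp3
        exact hzcov p hp1 hp2 (Nat.zero_le _) hp3
    · obtain ⟨hst, hac, hlr⟩ := hrun1 i h1 (by omega) hp
      obtain ⟨hst', hac', hlr'⟩ := hrun0 (i+1) (by omega) (by omega) hp'
      apply hno
      have hdisj' : ∀ u, u ∈ A1.accepts → u ∈ A0.accepts → False := fun u hu1 hu0 =>
        hdisj u hu0 hu1
      obtain ⟨t, ht⟩ := trigger A1 A0 lett N (P i) (P (i+1)) (F1 i) (F0 (i+1))
        (hPmono i (i+1) h1 (by omega) (by omega)) hlr hlr' hst hac hst' hac' hdisj' zs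
        (by
          intro z hz
          exact ⟨(hzp z hz).2.1, (hzp z hz).2.2.1⟩) hzpair
        (by
          intro z hz
          exact (hzp z hz).2.2.2.1)
        (by
          intro z hz
          have hsat := (hzp z hz).2.2.2.2
          obtain ⟨hc1, hc2⟩ := hsat
          constructor
          · rcases hc1 with ⟨hbad, _⟩ | ⟨_, hc⟩
            · omega
            · exact hc
          · rcases hc2 with ⟨_, hc⟩ | ⟨hbad, _⟩
            · exact hc
            · omega)
        (by
          intro p hp1 hp2 hp3
          exact hzcov p hp1 hp2 (Nat.zero_le _) hp3)
      exact ⟨t, InfSubTower'_swap ht⟩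
  -- strictness: each step contributes a new position
  have hstrict : ∀ i, 1 ≤ i → i < r → ∃ p ∈ P (i+1), p ∉ P i := by
    intro i h1 h2
    have hne : P i ≠ P (i+1) := by
      intro he
      have e1 : w i = w (i+1) := by
        rw [hPw i h1 (by omega), hPw (i+1) (by omega) (by omega), he]
      rcases (by omega : i % 2 = 0 ∧ (i+1) % 2 = 1 ∨ i % 2 = 1 ∧ (i+1) % 2 = 0) with
        ⟨hp, hp'⟩ | ⟨hp, hp'⟩
      · exact hdisj (w i) ((hmem i h1 (by omega)).1 hp)
          (by rw [e1]; exact (hmem (i+1) (by omega) (by omega)).2 hp')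
      · exact hdisj (w i) (by rw [e1]; exact (hmem (i+1) (by omega) (by omega)).1 hp')
          ((hmem i h1 (by omega)).2 hp)
    have hss : P i ⊂ P (i+1) :=
      Finset.ssubset_iff_subset_ne.mpr ⟨hPmono i (i+1) h1 (by omega) (by omega), hne⟩
    obtain ⟨p, hp1, hp2⟩ := Finset.exists_of_ssubset hss
    exact ⟨p, hp1, hp2⟩
  -- apply the counting lemma
  have hcount := counting lett P F0 F1 (n := n) hn h0 h1 (fun i a b c => (hrun0 i a b c).2.2)
    (fun i a b c => (hrun1 i a b c).2.2) hPmono m Finset.univ (by rw [← hα]; exact le_rfl)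
    0 N r (by omega) le_rfl (Nat.zero_le N) le_rfl
    (fun i _ _ t _ _ _ => Finset.mem_univ _)
    (Finset.Ico 1 r)
    (by
      intro i hi
      rw [Finset.mem_Ico] at hi
      obtain ⟨p, hp1, hp2⟩ := hstrict i hi.1 hi.2
      exact ⟨⟨hi.1, hi.2⟩, ⟨p, hp1, hp2, Nat.zero_le _,
        hPsub (i+1) (by omega) (by omega) p hp1⟩, hnosat i hi.1 hi.2⟩)
  rw [Nat.card_Ico] at hcount
  have hsum : ∑ i ∈ Finset.range (m + 1), n ^ i =
      (∑ d ∈ Finset.range m, n ^ (d + 1)) + n ^ 0 :=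
    Finset.sum_range_succ' (fun i => n ^ i) m
  rw [hsum, pow_zero]
  omega
end

section
/- Let A be an NFA of depth n and let q' ∈ δ(q, w). Then w admits a cyclic factorization w = v₁ v₂ ⋯ v_k with respect to (q, q') containing at most n cycle factors and at most n − 1 letter factors; moreover, if w does not admit the trivial factorization (k = 1 with a cycle over alph(w)), then alph(v_i) ⊊ alph(w) for each cycle factor v_i. -/
/-- There is a path from `p` to `q` labelled `v` in `M` that contains a cycle over
`alph(v)`: the path splits as `p →^x s →^z s →^y q` where `alph(z) = alph(v)`. -/
def HasCycleOver {α σ : Type*} (M : NFA α σ) (p : σ) (v : List α) (q : σ) : Prop :=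
  ∃ (x z y : List α) (s : σ), v = x ++ z ++ y ∧
    {c | c ∈ z} = {c | c ∈ v} ∧
    s ∈ M.evalFrom {p} x ∧ s ∈ M.evalFrom {s} z ∧ q ∈ M.evalFrom {s} y


lemma exists_run {α σ : Type*} (M : NFA α σ) :
    ∀ (w : List α) (S : Set σ) (q' : σ), q' ∈ M.evalFrom S w →
      ∃ r : ℕ → σ, r 0 ∈ S ∧ r w.length = q' ∧
        ∀ i, (h : i < w.length) → r (i+1) ∈ M.step (r i) (w[i]'h) := by
  intro w
  induction w with
  | nil =>
    intro S q' h
    exact ⟨fun _ => q', h, rfl, fun i hi => absurd hi (by simp)⟩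
  | cons a w ih =>
    intro S q' h
    obtain ⟨r, hr0, hrlen, hrstep⟩ := ih (M.stepSet S a) q' h
    rw [NFA.mem_stepSet] at hr0
    obtain ⟨p, hpS, hp⟩ := hr0
    refine ⟨fun i => match i with | 0 => p | j+1 => r j, hpS, hrlen, ?_⟩
    intro i hi
    match i with
    | 0 => exact hp
    | j+1 => exact hrstep j (by simpa using hi)


lemma run_evalFrom {α σ : Type*} (M : NFA α σ) (w : List α) (r : ℕ → σ)
    (hr : ∀ i, (h : i < w.length) → r (i+1) ∈ M.step (r i) (w[i]'h)) :
    ∀ b, b ≤ w.length → ∀ a, a ≤ b → r b ∈ M.evalFrom {r a} ((w.take b).drop a) := by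
  intro b
  induction b with
  | zero =>
    intro _ a ha
    interval_cases a
    simp [NFA.evalFrom]
  | succ b ih =>
    intro hb a ha
    rcases Nat.eq_or_lt_of_le ha with h | h
    · subst h
      simp [NFA.evalFrom, List.drop_take]
    · have ha' : a ≤ b := by omega
      have hblen : b < w.length := by omega
      have : w.take (b+1) = w.take b ++ [w[b]'hblen] := by
        rw [List.take_succ]
        simp [List.getElem?_eq_getElem hblen]
      rw [this, List.drop_append_of_le_length (by simp; omega),
        M.evalFrom_append, M.evalFrom_singleton, NFA.mem_stepSet]
      exact ⟨r b, ih (by omega) a ha', hr b hblen⟩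

lemma lemC {α σ : Type*} (M : NFA α σ) (m : ℕ) :
    ∀ (w : List α) (r : ℕ → σ), w.length = m →
    (∀ i, (h : i < w.length) → r (i+1) ∈ M.step (r i) (w[i]'h)) →
    ∃ (k : ℕ) (v : ℕ → List α) (qs : ℕ → σ) (L : List σ),
      ((List.range k).map v).flatten = w ∧
      qs 0 = r 0 ∧ qs k = r m ∧
      (∀ i < k, qs (i + 1) ∈ M.evalFrom {qs i} (v i)) ∧
      (∀ i < k, ((∃ c, v i = [c]) ∧ qs i ≠ qs (i + 1)) ∨
        (∃ a b, a ≤ b ∧ b ≤ m ∧ v i = (w.take b).drop a ∧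
          qs i = r a ∧ qs (i+1) = r b ∧ r a = r b)) ∧
      L.Chain' (fun p q => ∃ c, q ∈ M.step p c) ∧ L.Nodup ∧
      (∀ s ∈ L, ∃ j ≤ m, r j = s) ∧ L ≠ [] ∧ L.head? = some (r 0) ∧
      {i | i < k ∧ ¬ ((∃ c, v i = [c]) ∧ qs i ≠ qs (i + 1))}.ncard ≤ L.length ∧
      {i | i < k ∧ (∃ c, v i = [c]) ∧ qs i ≠ qs (i + 1)}.ncard + 1 ≤ L.length := by
  induction m using Nat.strong_induction_on with
  | _ m IH =>
  intro w r hw hr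
  classical
  set a := Nat.findGreatest (fun j => r j = r 0) m with ha_def
  have ha_le : a ≤ m := Nat.findGreatest_le m
  have ha_eq : r a = r 0 := Nat.findGreatest_spec (P := fun j => r j = r 0) (Nat.zero_le m) rfl
  have ha_max : ∀ j, a < j → j ≤ m → r j ≠ r 0 := fun j h1 h2 =>
    Nat.findGreatest_is_greatest (P := fun j => r j = r 0) h1 h2
  rcases Nat.eq_or_lt_of_le ha_le with hcase | hcase
  · -- base case : a = m, r m = r 0
    have hm0 : r m = r 0 := hcase ▸ ha_eq
    refine ⟨1, fun _ => w, fun _ => r 0, [r 0], ?_, rfl, hm0.symm, ?_, ?_, ?_, ?_, ?_, ?_, ?_, ?_, ?_⟩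
    · simp
    · intro i hi
      interval_cases i
      have := run_evalFrom M w r hr w.length le_rfl 0 (Nat.zero_le _)
      simp only [List.take_length, List.drop_zero] at this
      rw [hw, hm0] at this
      exact this
    · intro i hi
      interval_cases i
      refine Or.inr ⟨0, m, Nat.zero_le _, le_rfl, by simp [hw], rfl, hm0.symm, hm0.symm⟩
    · exact List.isChain_singleton _
    · simp
    · intro s hs; simp at hs; exact ⟨0, Nat.zero_le _, hs.symm⟩
    · simp
    · simp
    · calc {i | i < 1 ∧ ¬ _}.ncard ≤ ({0} : Set ℕ).ncard := by
            apply Set.ncard_le_ncard _ (Set.finite_singleton 0)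
            intro i hi; simp only [Set.mem_setOf_eq] at hi; simp; omega
          _ ≤ 1 := by simp
    · have : {i | i < 1 ∧ (∃ c, w = [c]) ∧ r 0 ≠ r 0} = ∅ := by
        ext i; simp
      rw [this]; simp
  · -- step case : a < m
    have ha1 : a + 1 ≤ m := hcase
    have hm' : m - (a+1) < m := by omega
    set w' := w.drop (a+1) with hw'_def
    set r' : ℕ → σ := fun j => r (a+1+j) with hr'_def
    have hw' : w'.length = m - (a+1) := by simp [hw'_def, hw]
    have hr' : ∀ i, (h : i < w'.length) → r' (i+1) ∈ M.step (r' i) (w'[i]'h) := by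
      intro i hi
      have h2 : a+1+i < w.length := by simp [hw'_def] at hi; omega
      have : w'[i]'hi = w[a+1+i]'h2 := by simp [hw'_def]
      rw [this]
      have := hr (a+1+i) h2
      simpa [hr'_def, Nat.add_assoc] using this
    obtain ⟨k', v', qs', L', hflat', hqs0', hqsk', htrans', hclass', hchain', hnodup',
      hocc', hne', hhead', hcyc', hlet'⟩ := IH (m - (a+1)) hm' w' r' hw' hr'
    have halen : a < w.length := by omega
    set k := k' + 2 with hk_def
    set v : ℕ → List α := fun i =>
      if i = 0 then w.take a else if i = 1 then [w[a]'halen] else v' (i - 2) with hv_def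
    set qs : ℕ → σ := fun i => if i ≤ 1 then r 0 else qs' (i - 2) with hqs_def
    have hv0 : v 0 = w.take a := rfl
    have hv1 : v 1 = [w[a]'halen] := rfl
    have hvj : ∀ j, v (j+2) = v' j := by intro j; simp [hv_def]
    have hqs0 : qs 0 = r 0 := rfl
    have hqs1 : qs 1 = r 0 := rfl
    have hqsj : ∀ j, qs (j+2) = qs' j := by intro j; simp [hqs_def]
    have hra1 : qs' 0 = r (a+1) := by simp [hqs0', hr'_def]
    refine ⟨k, v, qs, r 0 :: L', ?_, rfl, ?_, ?_, ?_, ?_, ?_, ?_, ?_, ?_, ?_, ?_⟩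
    · -- flatten
      have : List.range k = List.range 2 ++ (List.range k').map (2+·) := by
        rw [hk_def, Nat.add_comm]; exact List.range_add (n := 2) (m := k')
      rw [this, List.map_append, List.flatten_append, List.map_map]
      have h1 : ((List.range 2).map v).flatten = w.take a ++ [w[a]'halen] := by
        simp [List.range_succ, hv0, hv1]
      have h2 : (List.range k').map (v ∘ (2+·)) = (List.range k').map v' := by
        apply List.map_congr_left
        intro j _
        show v (2+j) = v' j
        rw [Nat.add_comm]; exact hvj j
      rw [h1, h2, hflat', hw'_def, List.append_assoc, List.singleton_append,
        ← List.drop_eq_getElem_cons halen, List.take_append_drop]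
    · -- qs k = r m
      show qs (k'+2) = r m
      rw [hqsj, hqsk']
      simp only [hr'_def]
      congr 1
      omega
    · -- transitions
      intro i hi
      match i with
      | 0 =>
        show qs 1 ∈ M.evalFrom {qs 0} (v 0)
        rw [hqs0, hqs1, hv0, ← ha_eq]
        have := run_evalFrom M w r hr a (by omega) 0 (Nat.zero_le _)
        simpa [List.take_take, ha_eq] using this
      | 1 =>
        show qs 2 ∈ M.evalFrom {qs 1} (v 1)
        rw [hqs1, hv1]
        show qs (0+2) ∈ _
        rw [hqsj, hra1]
        have : M.evalFrom {r 0} [w[a]'halen] = M.stepSet {r 0} (w[a]'halen) := rfl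
        rw [this, NFA.mem_stepSet]
        exact ⟨r 0, rfl, by rw [← ha_eq]; exact hr a halen⟩
      | (j+2) =>
        have hj : j < k' := by omega
        have := htrans' j hj
        show qs (j+1+2) ∈ M.evalFrom {qs (j+2)} (v (j+2))
        rw [hqsj, hqsj, hvj]
        exact this
    · -- classification
      intro i hi
      match i with
      | 0 =>
        refine Or.inr ⟨0, a, Nat.zero_le _, by omega, ?_, hqs0, ?_, ha_eq.symm⟩
        · rw [hv0]; simp
        · rw [hqs1, ha_eq]
      | 1 =>
        refine Or.inl ⟨⟨_, hv1⟩, ?_⟩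
        show qs 1 ≠ qs (0+2)
        rw [hqs1, hqsj, hra1]
        exact fun h => ha_max (a+1) (by omega) (by omega) h.symm
      | (j+2) =>
        have hj : j < k' := by omega
        rcases hclass' j hj with ⟨hc, hne⟩ | ⟨a', b', hab', hbm', hveq', hq1', hq2', hr'eq⟩
        · refine Or.inl ⟨by rwa [hvj], ?_⟩
          show qs (j+2) ≠ qs (j+1+2)
          rw [hqsj, hqsj]; exact hne
        · refine Or.inr ⟨a+1+a', a+1+b', by omega, by omega, ?_, ?_, ?_, ?_⟩
          · rw [hvj, hveq', hw'_def]
            rw [List.take_drop, List.drop_drop]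
          · rw [hqsj, hq1']
          · show qs (j+1+2) = _
            rw [hqsj, hq2']
          · simpa [hr'_def] using hr'eq
    · -- chain
      obtain ⟨x, t, hxt⟩ := List.exists_cons_of_ne_nil hne'
      subst hxt
      rw [List.Chain', List.isChain_cons_cons]
      refine ⟨⟨w[a]'halen, ?_⟩, hchain'⟩
      have hx : x = r (a+1) := by
        have : (x :: t).head? = some x := rfl
        rw [hhead'] at this
        have := Option.some.inj this
        rw [← this]
      rw [hx, ← ha_eq]
      exact hr a halen
    · -- nodup
      rw [List.nodup_cons]
      refine ⟨?_, hnodup'⟩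
      intro hmem
      obtain ⟨j, hjle, hjeq⟩ := hocc' (r 0) hmem
      exact ha_max (a+1+j) (by omega) (by omega) (by simpa [hr'_def] using hjeq)
    · -- occurrences
      intro s hs
      rcases List.mem_cons.mp hs with h | h
      · exact ⟨0, Nat.zero_le _, h.symm⟩
      · obtain ⟨j, hjle, hjeq⟩ := hocc' s h
        exact ⟨a+1+j, by omega, hjeq⟩
    · simp
    · rfl
    · -- cycle count
      have hfin' : {i | i < k' ∧ ¬ ((∃ c, v' i = [c]) ∧ qs' i ≠ qs' (i + 1))}.Finite :=
        Set.Finite.subset (Set.finite_Iio k') (fun i hi => hi.1)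
      have hsub : {i | i < k ∧ ¬ ((∃ c, v i = [c]) ∧ qs i ≠ qs (i + 1))} ⊆
          insert 0 ((fun j => j + 2) ''
            {i | i < k' ∧ ¬ ((∃ c, v' i = [c]) ∧ qs' i ≠ qs' (i + 1))}) := by
        intro i hi
        obtain ⟨hik, hnl⟩ := hi
        clear_value k v qs
        match i, hik, hnl with
        | 0, hik, hnl => exact Set.mem_insert _ _
        | 1, hik, hnl =>
          exfalso
          apply hnl
          refine ⟨⟨_, hv1⟩, ?_⟩
          show qs 1 ≠ qs (0+2)
          rw [hqs1, hqsj, hra1]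
          exact fun h => ha_max (a+1) (by omega) (by omega) h.symm
        | (j+2), hik, hnl =>
          refine Set.mem_insert_of_mem _ ⟨j, ⟨by omega, ?_⟩, rfl⟩
          intro hc
          apply hnl
          refine ⟨by rw [hvj]; exact hc.1, ?_⟩
          show qs (j+2) ≠ qs (j+1+2)
          rw [hqsj, hqsj]; exact hc.2
      calc {i | i < k ∧ ¬ ((∃ c, v i = [c]) ∧ qs i ≠ qs (i + 1))}.ncard
          ≤ (insert 0 ((fun j => j + 2) ''
            {i | i < k' ∧ ¬ ((∃ c, v' i = [c]) ∧ qs' i ≠ qs' (i + 1))})).ncard :=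
            Set.ncard_le_ncard hsub (Set.Finite.insert _ (hfin'.image _))
        _ ≤ ((fun j => j + 2) ''
            {i | i < k' ∧ ¬ ((∃ c, v' i = [c]) ∧ qs' i ≠ qs' (i + 1))}).ncard + 1 :=
            Set.ncard_insert_le _ _
        _ = {i | i < k' ∧ ¬ ((∃ c, v' i = [c]) ∧ qs' i ≠ qs' (i + 1))}.ncard + 1 := by
            rw [Set.ncard_image_of_injective _ (fun x y h => by omega)]
        _ ≤ L'.length + 1 := by omega
        _ = (r 0 :: L').length := by simp
    · -- letter count
      have hfin' : {i | i < k' ∧ (∃ c, v' i = [c]) ∧ qs' i ≠ qs' (i + 1)}.Finite :=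
        Set.Finite.subset (Set.finite_Iio k') (fun i hi => hi.1)
      have hsub : {i | i < k ∧ (∃ c, v i = [c]) ∧ qs i ≠ qs (i + 1)} ⊆
          insert 1 ((fun j => j + 2) ''
            {i | i < k' ∧ (∃ c, v' i = [c]) ∧ qs' i ≠ qs' (i + 1)}) := by
        intro i hi
        obtain ⟨hik, hc, hne⟩ := hi
        clear_value k v qs
        match i, hik, hc, hne with
        | 0, hik, hc, hne =>
          exfalso
          exact hne (by rw [hqs0, hqs1])
        | 1, hik, hc, hne => exact Set.mem_insert _ _
        | (j+2), hik, hc, hne =>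
          refine Set.mem_insert_of_mem _ ⟨j, ⟨by omega, by rwa [hvj] at hc, ?_⟩, rfl⟩
          have := hne
          show qs' j ≠ qs' (j+1)
          rw [← hqsj, ← hqsj]
          exact this
      have h1 : {i | i < k ∧ (∃ c, v i = [c]) ∧ qs i ≠ qs (i + 1)}.ncard
          ≤ {i | i < k' ∧ (∃ c, v' i = [c]) ∧ qs' i ≠ qs' (i + 1)}.ncard + 1 := by
        calc {i | i < k ∧ (∃ c, v i = [c]) ∧ qs i ≠ qs (i + 1)}.ncard
            ≤ (insert 1 ((fun j => j + 2) ''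
              {i | i < k' ∧ (∃ c, v' i = [c]) ∧ qs' i ≠ qs' (i + 1)})).ncard :=
              Set.ncard_le_ncard hsub (Set.Finite.insert _ (hfin'.image _))
          _ ≤ ((fun j => j + 2) ''
              {i | i < k' ∧ (∃ c, v' i = [c]) ∧ qs' i ≠ qs' (i + 1)}).ncard + 1 :=
              Set.ncard_insert_le _ _
          _ = {i | i < k' ∧ (∃ c, v' i = [c]) ∧ qs' i ≠ qs' (i + 1)}.ncard + 1 := by
              rw [Set.ncard_image_of_injective _ (fun x y h => by omega)]
      simp only [List.length_cons]
      omega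


theorem cyclic_factorization {α σ : Type*} (M : NFA α σ) (n : ℕ)
    (hdepth : DepthLE M n) (q q' : σ) (w : List α)
    (hpath : q' ∈ M.evalFrom {q} w) :
    ∃ (k : ℕ) (v : ℕ → List α) (qs : ℕ → σ),
      -- `w = v₁ v₂ ⋯ v_k` along intermediate states `qs`
      ((List.range k).map v).flatten = w ∧
      qs 0 = q ∧ qs k = q' ∧
      (∀ i < k, qs (i + 1) ∈ M.evalFrom {qs i} (v i)) ∧
      -- each factor is a single letter or labels a path with a cycle over its alphabet
      (∀ i < k, (∃ c, v i = [c]) ∨ HasCycleOver M (qs i) (v i) (qs (i + 1))) ∧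
      -- at most `n` cycle factors
      {i | i < k ∧ ¬ ((∃ c, v i = [c]) ∧ qs i ≠ qs (i + 1))}.ncard ≤ n ∧
      -- at most `n − 1` letter factors
      {i | i < k ∧ (∃ c, v i = [c]) ∧ qs i ≠ qs (i + 1)}.ncard ≤ n - 1 ∧
      -- if `w` does not admit the trivial factorization with respect to `(q, q')`,
      -- every cycle factor uses a strict subalphabet of `alph(w)`
      (¬ HasCycleOver M q w q' →
        ∀ i < k, ¬ ((∃ c, v i = [c]) ∧ qs i ≠ qs (i + 1)) →
          {c | c ∈ v i} ⊂ {c | c ∈ w}) := by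
  obtain ⟨r, hr0, hrm, hrstep⟩ := exists_run M w {q} q' hpath
  have hr0' : r 0 = q := hr0
  obtain ⟨k, v, qs, L, hflat, hqs0, hqsk, htrans, hclass, hchain, hnodup, hocc, hne,
    hhead, hcyc, hlet⟩ := lemC M w.length w r rfl hrstep
  have hLn : L.length ≤ n := hdepth L hchain hnodup
  refine ⟨k, v, qs, hflat, by rw [hqs0, hr0'], by rw [hqsk, hrm], htrans, ?_, ?_, ?_, ?_⟩
  · -- each factor single letter or HasCycleOver
    intro i hi
    rcases hclass i hi with ⟨⟨c, hc⟩, _⟩ | ⟨a, b, hab, hbm, hv, h1, h2, h3⟩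
    · exact Or.inl ⟨c, hc⟩
    · refine Or.inr ⟨[], v i, [], r a, by simp, rfl, ?_, ?_, ?_⟩
      · show r a ∈ ({qs i} : Set σ)
        rw [h1]
        exact rfl
      · rw [hv]
        have := run_evalFrom M w r hrstep b hbm a hab
        rwa [← h3] at this
      · show qs (i+1) ∈ ({r a} : Set σ)
        rw [h2, h3]
        exact rfl
  · exact le_trans hcyc hLn
  · omega
  · -- strict subalphabet
    intro hnot i hi hnl
    rcases hclass i hi with hL | ⟨a, b, hab, hbm, hv, h1, h2, h3⟩
    · exact absurd hL hnl
    rw [Set.ssubset_iff_subset_ne]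
    constructor
    · intro c hc
      simp only [Set.mem_setOf_eq] at *
      rw [hv] at hc
      exact List.mem_of_mem_take (List.mem_of_mem_drop hc)
    · intro heq
      apply hnot
      have hsplit : w.take a ++ (w.take b).drop a = w.take b := by
        have : w.take a = (w.take b).take a := by
          rw [List.take_take]
          congr 1
          omega
        rw [this]
        exact List.take_append_drop a (w.take b)
      refine ⟨w.take a, v i, w.drop b, r a, ?_, heq, ?_, ?_, ?_⟩
      · rw [hv]
        calc w = w.take b ++ w.drop b := (List.take_append_drop b w).symm
          _ = (w.take a ++ (w.take b).drop a) ++ w.drop b := by rw [hsplit]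
      · have := run_evalFrom M w r hrstep a (le_trans hab hbm) 0 (Nat.zero_le _)
        simpa [hr0'] using this
      · rw [hv]
        have := run_evalFrom M w r hrstep b hbm a hab
        rwa [← h3] at this
      · have := run_evalFrom M w r hrstep w.length le_rfl b hbm
        rw [List.take_length, hrm, ← h3] at this
        exact this
end
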